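/- arXiv:1311.1900 — 6 statements merged into one kernel-verified Lean document; each statement's English description precedes it below -/
import Mathlib

section
/- Let (X, L) be a random vector with values in ℝ × [0,∞) whose law has density h(x,l) = (1/√(2π))·(|x|+l)·exp(−(|x|+l)²/2) with respect to Lebesgue measure on ℝ × [0,∞). Then almost surely E[L | σ(X)] = H(|X|) and E[|X| | σ(L)] = H(L), where H(l) = e^{l²/2} ∫_l^∞ e^{−x²/2} dx. -/
open MeasureTheory ProbabilityTheory Real
open scoped ENNReal

/-- `H l = e^{l²/2} ∫_l^∞ e^{-x²/2} dx`. -/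
noncomputable def H (l : ℝ) : ℝ :=
  Real.exp (l ^ 2 / 2) * ∫ x in Set.Ioi l, Real.exp (-x ^ 2 / 2)

/-- The joint density of `(B₁, L₁)`:
`h x l = (1/√(2π)) (|x|+l) exp(-(|x|+l)²/2)` for `x ∈ ℝ`, `l ≥ 0`. -/
noncomputable def jointDensity (x l : ℝ) : ℝ :=
  (1 / Real.sqrt (2 * π)) * (|x| + l) * Real.exp (-(|x| + l) ^ 2 / 2)

namespace CondExpAux

open Set Filter

noncomputable def c0 : ℝ := 1 / Real.sqrt (2 * π)

lemma c0_nonneg : 0 ≤ c0 := by unfold c0; positivity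

lemma jd_eq (x l : ℝ) :
    jointDensity x l = c0 * ((|x| + l) * exp (-(|x| + l) ^ 2 / 2)) := by
  unfold jointDensity c0; ring

lemma intexp (c : ℝ) (hc : 0 < c) : Integrable (fun x : ℝ => exp (-x^2/c)) := by
  have h := integrable_exp_neg_mul_sq (b := 1/c) (by positivity)
  refine h.congr ?_
  filter_upwards with x using by ring_nf

lemma sqle (u : ℝ) : u^2 * exp (-u^2/2) ≤ 4 * exp (-u^2/4) := by
  have h1 : u^2/4 ≤ exp (u^2/4) := (Real.add_one_le_exp _).trans' (by nlinarith [sq_nonneg u])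
  have hE : exp (-u^2/2) = exp (-u^2/4) * exp (-u^2/4) := by
    rw [← Real.exp_add]; ring_nf
  rw [hE, show u^2 * (exp (-u^2/4) * exp (-u^2/4)) = (u^2/4 * exp (-u^2/4)) * (4 * exp (-u^2/4))
    by ring]
  have h3 : u^2/4 * exp (-u^2/4) ≤ 1 := by
    rw [show (-u^2/4 : ℝ) = -(u^2/4) by ring, Real.exp_neg]
    calc u^2/4 * (exp (u^2/4))⁻¹ ≤ exp (u^2/4) * (exp (u^2/4))⁻¹ :=
          mul_le_mul_of_nonneg_right h1 (by positivity)
      _ = 1 := mul_inv_cancel₀ (by positivity)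
  nlinarith [exp_pos (-u^2/4)]

lemma absle (u : ℝ) : |u| * exp (-u^2/2) ≤ exp (-u^2/4) := by
  have h1 : |u| ≤ exp (u^2/4) := by
    refine (Real.add_one_le_exp _).trans' ?_
    nlinarith [sq_abs u, sq_nonneg (|u| - 2)]
  calc |u| * exp (-u^2/2) ≤ exp (u^2/4) * exp (-u^2/2) :=
        mul_le_mul_of_nonneg_right h1 (exp_pos _).le
    _ = exp (-u^2/4) := by rw [← Real.exp_add]; ring_nf

lemma int_sq : Integrable (fun u : ℝ => u^2 * exp (-u^2/2)) := by
  refine ((intexp 4 (by norm_num)).const_mul 4).mono ?_ ?_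
  · apply Continuous.aestronglyMeasurable; continuity
  · filter_upwards with u
    rw [norm_of_nonneg (by positivity), norm_of_nonneg (by positivity)]
    exact sqle u

lemma int_mul : Integrable (fun u : ℝ => u * exp (-u^2/2)) := by
  refine (integrable_mul_exp_neg_mul_sq (b := 1/2) (by norm_num)).congr ?_
  filter_upwards with x using by ring_nf

lemma key1 (b : ℝ) : ∫ u in Ioi b, u * exp (-u^2/2) = exp (-b^2/2) := by
  have h := integral_Ioi_of_hasDerivAt_of_tendsto' (f := fun u => -exp (-u^2/2))
    (f' := fun u => u * exp (-u^2/2)) (a := b) (m := 0) ?_ ?_ ?_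
  · simpa using h
  · intro x _
    have : HasDerivAt (fun u : ℝ => -u^2/2) (-x) x := by
      have := ((hasDerivAt_pow 2 x).div_const 2).neg
      simp only [neg_div] at this ⊢
      simpa [Pi.neg_def] using this
    simpa [mul_comm, Pi.neg_def] using (this.exp).neg
  · exact int_mul.integrableOn
  · rw [show (0:ℝ) = -0 by norm_num]
    apply Filter.Tendsto.neg
    have : Tendsto (fun u : ℝ => -u^2/2) atTop atBot := by
      apply Filter.Tendsto.atBot_div_const (by norm_num)
      simpa using (tendsto_pow_atTop (n := 2) (by norm_num)).neg
    exact Real.tendsto_exp_atBot.comp this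

lemma tend2 : Tendsto (fun u : ℝ => -(u * exp (-u^2/2))) atTop (nhds 0) := by
  rw [show (0:ℝ) = -0 by norm_num]
  apply Filter.Tendsto.neg
  have hb : Tendsto (fun u : ℝ => exp (-u^2/4)) atTop (nhds 0) := by
    apply Real.tendsto_exp_atBot.comp
    apply Filter.Tendsto.atBot_div_const (by norm_num)
    simpa using (tendsto_pow_atTop (n := 2) (by norm_num)).neg
  refine squeeze_zero_norm ?_ hb
  intro u
  rw [norm_mul, norm_of_nonneg (exp_pos _).le]
  simpa [abs_abs] using absle u

lemma key2 (b : ℝ) :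
    ∫ u in Ioi b, u^2 * exp (-u^2/2) = b * exp (-b^2/2) + ∫ u in Ioi b, exp (-u^2/2) := by
  have h := integral_Ioi_of_hasDerivAt_of_tendsto' (f := fun u => -(u * exp (-u^2/2)))
    (f' := fun u => u^2 * exp (-u^2/2) - exp (-u^2/2)) (a := b) (m := 0) ?_ ?_ tend2
  · have hsub : ∫ u in Ioi b, (u^2 * exp (-u^2/2) - exp (-u^2/2))
        = (∫ u in Ioi b, u^2 * exp (-u^2/2)) - ∫ u in Ioi b, exp (-u^2/2) :=
      integral_sub int_sq.integrableOn ((intexp 2 (by norm_num)).integrableOn)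
    rw [hsub] at h
    linarith [h]
  · intro x _
    have h1 : HasDerivAt (fun u : ℝ => exp (-u^2/2)) (-x * exp (-x^2/2)) x := by
      have : HasDerivAt (fun u : ℝ => -u^2/2) (-x) x := by
        have := ((hasDerivAt_pow 2 x).div_const 2).neg
        simp only [neg_div] at this ⊢
        simpa [Pi.neg_def] using this
      simpa [mul_comm] using this.exp
    have := ((hasDerivAt_id x).mul h1).neg
    convert this using 1
    · funext u; simp [Pi.neg_def]
    simp only [id_eq, one_mul]
    ring
  · exact (int_sq.sub (intexp 2 (by norm_num))).integrableOn

lemma shift (b : ℝ) (f : ℝ → ℝ) : ∫ x in Ioi (0:ℝ), f (x + b) = ∫ u in Ioi b, f u := by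
  have h := (measurePreserving_add_right (volume : Measure ℝ) b).setIntegral_preimage_emb
    (measurableEmbedding_addRight b) f (Ioi b)
  rw [← h]
  congr 1
  ext x
  simp

lemma M1 (b : ℝ) : ∫ l in Ioi (0:ℝ), (b + l) * exp (-(b + l)^2/2) = exp (-b^2/2) := by
  rw [← key1 b, ← shift b (fun u => u * exp (-u^2/2))]
  refine setIntegral_congr_fun measurableSet_Ioi fun l _ => ?_
  rw [add_comm b l]

lemma M2aux (b : ℝ) :
    ∫ u in Ioi b, (u - b) * (u * exp (-u^2/2)) = ∫ u in Ioi b, exp (-u^2/2) := by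
  have expand : ∀ u : ℝ, (u - b) * (u * exp (-u^2/2))
      = u^2 * exp (-u^2/2) - b * (u * exp (-u^2/2)) := by intro u; ring
  simp_rw [expand]
  rw [integral_sub int_sq.integrableOn ((int_mul.const_mul b).integrableOn),
    integral_const_mul, key1, key2]
  ring

lemma M2 (b : ℝ) :
    ∫ l in Ioi (0:ℝ), l * ((b + l) * exp (-(b + l)^2/2)) = ∫ u in Ioi b, exp (-u^2/2) := by
  rw [← M2aux b, ← shift b (fun u => (u - b) * (u * exp (-u^2/2)))]
  refine setIntegral_congr_fun measurableSet_Ioi fun l _ => ?_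
  rw [add_comm b l, add_sub_cancel_right]

lemma M1' (b : ℝ) : ∫ t in Ioi (0:ℝ), (t + b) * exp (-(t + b)^2/2) = exp (-b^2/2) := by
  rw [← M1 b]
  exact setIntegral_congr_fun measurableSet_Ioi fun t _ => by rw [add_comm t b]

lemma M2' (b : ℝ) :
    ∫ t in Ioi (0:ℝ), t * ((t + b) * exp (-(t + b)^2/2)) = ∫ u in Ioi b, exp (-u^2/2) := by
  rw [← M2 b]
  exact setIntegral_congr_fun measurableSet_Ioi fun t _ => by rw [add_comm t b]

lemma H_nonneg (l : ℝ) : 0 ≤ H l :=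
  mul_nonneg (exp_pos _).le (setIntegral_nonneg measurableSet_Ioi fun x _ => (exp_pos _).le)

lemma measurable_H : Measurable H := by
  have hanti : Antitone (fun l : ℝ => ∫ x in Ioi l, exp (-x^2/2)) := by
    intro a b hab
    refine setIntegral_mono_set (intexp 2 (by norm_num)).integrableOn ?_ ?_
    · filter_upwards with x using (exp_pos _).le
    · exact HasSubset.Subset.eventuallyLE (Ioi_subset_Ioi hab)
  have h1 : Measurable (fun l : ℝ => exp (l^2/2)) := by fun_prop
  exact h1.mul hanti.measurable

lemma H_le {l : ℝ} (hl : 0 ≤ l) : H l ≤ ∫ x : ℝ, exp (-x^2/2) := by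
  unfold H
  rw [← shift l (fun x => exp (-x^2/2)), ← integral_const_mul]
  have hint : IntegrableOn (fun x : ℝ => exp (l^2/2) * exp (-(x + l)^2/2)) (Ioi 0) := by
    refine Integrable.mono' ((intexp 2 (by norm_num)).integrableOn) ?_ ?_
    · apply Continuous.aestronglyMeasurable; continuity
    · rw [ae_restrict_iff' measurableSet_Ioi]
      filter_upwards with x hx
      rw [norm_of_nonneg (by positivity), ← Real.exp_add]
      apply exp_le_exp.mpr
      have : (0:ℝ) < x := hx
      nlinarith
  calc ∫ x in Ioi (0:ℝ), exp (l^2/2) * exp (-(x + l)^2/2)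
      ≤ ∫ x in Ioi (0:ℝ), exp (-x^2/2) := by
        refine setIntegral_mono_on hint ((intexp 2 (by norm_num)).integrableOn)
          measurableSet_Ioi ?_
        intro x hx
        rw [← Real.exp_add]
        apply exp_le_exp.mpr
        have : (0:ℝ) < x := hx
        nlinarith
    _ ≤ ∫ x : ℝ, exp (-x^2/2) := by
        refine setIntegral_le_integral (intexp 2 (by norm_num)) ?_
        filter_upwards with x using (exp_pos _).le

noncomputable def dR (p : ℝ × ℝ) : ℝ := if 0 ≤ p.2 then jointDensity p.1 p.2 else 0

lemma dR_nonneg (p : ℝ × ℝ) : 0 ≤ dR p := by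
  unfold dR
  split
  · rename_i h
    rw [jd_eq]
    exact mul_nonneg c0_nonneg
      (mul_nonneg (add_nonneg (abs_nonneg _) h) (exp_pos _).le)
  · exact le_refl 0
  
lemma measurable_dR : Measurable dR := by
  have h1 : Measurable (fun p : ℝ × ℝ => |p.1| + p.2) := measurable_fst.abs.add measurable_snd
  have hJ : Measurable (fun p : ℝ × ℝ => jointDensity p.1 p.2) := by
    simp only [jd_eq]
    exact measurable_const.mul (h1.mul (((h1.pow_const 2).neg.div_const 2).exp))
  exact Measurable.ite (measurableSet_le measurable_const measurable_snd) hJ measurable_const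

lemma u_bound {x l : ℝ} (hl : 0 ≤ l) :
    (|x| + l) * exp (-(|x| + l)^2/2) ≤ exp (-x^2/4) * exp (-l^2/4) := by
  have h1 := absle (|x| + l)
  rw [abs_of_nonneg (add_nonneg (abs_nonneg x) hl)] at h1
  refine h1.trans ?_
  rw [← Real.exp_add]
  apply exp_le_exp.mpr
  nlinarith [sq_abs x, mul_nonneg (abs_nonneg x) hl]

lemma u2_bound {x l : ℝ} (hl : 0 ≤ l) :
    (|x| + l)^2 * exp (-(|x| + l)^2/2) ≤ 4 * (exp (-x^2/4) * exp (-l^2/4)) := by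
  refine (sqle (|x| + l)).trans ?_
  have : exp (-(|x| + l)^2/4) ≤ exp (-x^2/4) * exp (-l^2/4) := by
    rw [← Real.exp_add]
    apply exp_le_exp.mpr
    nlinarith [sq_abs x, mul_nonneg (abs_nonneg x) hl]
  linarith
  
lemma dR_le (p : ℝ × ℝ) : dR p ≤ c0 * (exp (-p.1^2/4) * exp (-p.2^2/4)) := by
  unfold dR
  split
  · rename_i h
    rw [jd_eq]
    exact mul_le_mul_of_nonneg_left (u_bound h) c0_nonneg
  · exact mul_nonneg c0_nonneg (by positivity)

lemma snd_dR_le (p : ℝ × ℝ) : |p.2| * dR p ≤ 4 * c0 * (exp (-p.1^2/4) * exp (-p.2^2/4)) := by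
  unfold dR
  split
  · rename_i h
    rw [abs_of_nonneg h, jd_eq]
    have e : 0 ≤ exp (-(|p.1| + p.2)^2/2) := (exp_pos _).le
    have hu : 0 ≤ |p.1| + p.2 := add_nonneg (abs_nonneg _) h
    have h2 : p.2 * ((|p.1| + p.2) * exp (-(|p.1| + p.2)^2/2))
        ≤ (|p.1| + p.2)^2 * exp (-(|p.1| + p.2)^2/2) := by
      have hq : p.2 * (|p.1| + p.2) ≤ (|p.1| + p.2)^2 := by
        nlinarith [mul_nonneg hu (abs_nonneg p.1)]
      calc p.2 * ((|p.1| + p.2) * exp (-(|p.1| + p.2)^2/2))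
          = (p.2 * (|p.1| + p.2)) * exp (-(|p.1| + p.2)^2/2) := by ring
        _ ≤ (|p.1| + p.2)^2 * exp (-(|p.1| + p.2)^2/2) :=
            mul_le_mul_of_nonneg_right hq e
    calc p.2 * (c0 * ((|p.1| + p.2) * exp (-(|p.1| + p.2)^2/2)))
        = c0 * (p.2 * ((|p.1| + p.2) * exp (-(|p.1| + p.2)^2/2))) := by ring
      _ ≤ c0 * ((|p.1| + p.2)^2 * exp (-(|p.1| + p.2)^2/2)) :=
          mul_le_mul_of_nonneg_left h2 c0_nonneg
      _ ≤ c0 * (4 * (exp (-p.1^2/4) * exp (-p.2^2/4))) :=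
          mul_le_mul_of_nonneg_left (u2_bound h) c0_nonneg
      _ = 4 * c0 * (exp (-p.1^2/4) * exp (-p.2^2/4)) := by ring
  · simp only [mul_zero]
    exact mul_nonneg (mul_nonneg (by norm_num) c0_nonneg) (by positivity)

lemma fst_dR_le (p : ℝ × ℝ) : |p.1| * dR p ≤ 4 * c0 * (exp (-p.1^2/4) * exp (-p.2^2/4)) := by
  unfold dR
  split
  · rename_i h
    rw [jd_eq]
    have e : 0 ≤ exp (-(|p.1| + p.2)^2/2) := (exp_pos _).le
    have hu : 0 ≤ |p.1| + p.2 := add_nonneg (abs_nonneg _) h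
    have h2 : |p.1| * ((|p.1| + p.2) * exp (-(|p.1| + p.2)^2/2))
        ≤ (|p.1| + p.2)^2 * exp (-(|p.1| + p.2)^2/2) := by
      have hq : |p.1| * (|p.1| + p.2) ≤ (|p.1| + p.2)^2 := by
        nlinarith [mul_nonneg hu h]
      calc |p.1| * ((|p.1| + p.2) * exp (-(|p.1| + p.2)^2/2))
          = (|p.1| * (|p.1| + p.2)) * exp (-(|p.1| + p.2)^2/2) := by ring
        _ ≤ (|p.1| + p.2)^2 * exp (-(|p.1| + p.2)^2/2) :=
            mul_le_mul_of_nonneg_right hq e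
    calc |p.1| * (c0 * ((|p.1| + p.2) * exp (-(|p.1| + p.2)^2/2)))
        = c0 * (|p.1| * ((|p.1| + p.2) * exp (-(|p.1| + p.2)^2/2))) := by ring
      _ ≤ c0 * ((|p.1| + p.2)^2 * exp (-(|p.1| + p.2)^2/2)) :=
          mul_le_mul_of_nonneg_left h2 c0_nonneg
      _ ≤ c0 * (4 * (exp (-p.1^2/4) * exp (-p.2^2/4))) :=
          mul_le_mul_of_nonneg_left (u2_bound h) c0_nonneg
      _ = 4 * c0 * (exp (-p.1^2/4) * exp (-p.2^2/4)) := by ring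
  · simp only [mul_zero]
    exact mul_nonneg (mul_nonneg (by norm_num) c0_nonneg) (by positivity)

lemma integral_dR_snd (x : ℝ) : ∫ l : ℝ, dR (x, l) = c0 * exp (-x^2/2) := by
  have h : (fun l => dR (x, l)) = (Ici (0:ℝ)).indicator (fun l => jointDensity x l) := by
    funext l
    simp [dR, Set.indicator_apply, Set.mem_Ici]
  rw [h, integral_indicator measurableSet_Ici, integral_Ici_eq_integral_Ioi]
  simp_rw [jd_eq]
  rw [integral_const_mul, M1, sq_abs]

lemma integral_mul_dR_snd (x : ℝ) :
    ∫ l : ℝ, l * dR (x, l) = c0 * ∫ u in Ioi |x|, exp (-u^2/2) := by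
  have h : (fun l => l * dR (x, l))
      = (Ici (0:ℝ)).indicator (fun l => c0 * (l * ((|x| + l) * exp (-(|x| + l)^2/2)))) := by
    funext l
    simp only [dR, Set.indicator_apply, Set.mem_Ici]
    split
    · rw [jd_eq]; ring
    · simp
  rw [h, integral_indicator measurableSet_Ici, integral_Ici_eq_integral_Ioi,
    integral_const_mul, M2]

lemma integral_dR_fst (l : ℝ) (hl : 0 ≤ l) :
    ∫ x : ℝ, dR (x, l) = 2 * (c0 * exp (-l^2/2)) := by
  have h : (fun x => dR (x, l)) = fun x => (fun t => c0 * ((t + l) * exp (-(t + l)^2/2))) |x| := by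
    funext x
    simp only [dR, if_pos hl, jd_eq]
  rw [h, integral_comp_abs (f := fun t => c0 * ((t + l) * exp (-(t + l)^2/2))),
    integral_const_mul, M1']
  
lemma integral_mul_dR_fst (l : ℝ) (hl : 0 ≤ l) :
    ∫ x : ℝ, |x| * dR (x, l) = 2 * (c0 * ∫ u in Ioi l, exp (-u^2/2)) := by
  have h : (fun x => |x| * dR (x, l))
      = fun x => (fun t => c0 * (t * ((t + l) * exp (-(t + l)^2/2)))) |x| := by
    funext x
    simp only [dR, if_pos hl, jd_eq]
    ring
  rw [h, integral_comp_abs (f := fun t => c0 * (t * ((t + l) * exp (-(t + l)^2/2)))),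
    integral_const_mul, M2']

lemma dR_zero {p : ℝ × ℝ} (h : p.2 < 0) : dR p = 0 := by
  unfold dR
  rw [if_neg (not_le.mpr h)]

lemma H_identity (t : ℝ) : H |t| * (c0 * exp (-t^2/2)) = c0 * ∫ u in Ioi |t|, exp (-u^2/2) := by
  unfold H
  rw [sq_abs]
  have : exp (t^2/2) * exp (-t^2/2) = 1 := by
    rw [← Real.exp_add]; ring_nf; exact Real.exp_zero
  calc exp (t^2/2) * (∫ u in Ioi |t|, exp (-u^2/2)) * (c0 * exp (-t^2/2))
      = (exp (t^2/2) * exp (-t^2/2)) * (c0 * ∫ u in Ioi |t|, exp (-u^2/2)) := by ring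
    _ = c0 * ∫ u in Ioi |t|, exp (-u^2/2) := by rw [this]; ring

lemma H_identity' {l : ℝ} (hl : 0 ≤ l) :
    H l * (2 * (c0 * exp (-l^2/2))) = 2 * (c0 * ∫ u in Ioi l, exp (-u^2/2)) := by
  have := H_identity l
  rw [abs_of_nonneg hl] at this
  linarith

end CondExpAux

open CondExpAux Set Filter

/-- If `(X, L)` has density `h(x,l)` (supported on `ℝ × [0,∞)`) with respect to Lebesgue
measure, then a.s. `E[L | σ(X)] = H(|X|)` and `E[|X| | σ(L)] = H(L)`. -/
theorem condExp_of_jointDensity {Ω : Type*} [MeasureSpace Ω]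
    [IsProbabilityMeasure (ℙ : Measure Ω)]
    (X L : Ω → ℝ) (hX : Measurable X) (hL : Measurable L)
    (hlaw : Measure.map (fun ω => (X ω, L ω)) ℙ
      = (volume : Measure (ℝ × ℝ)).withDensity
          (fun p => ENNReal.ofReal (if 0 ≤ p.2 then jointDensity p.1 p.2 else 0))) :
    (∀ᵐ ω ∂ℙ, (ℙ[L | MeasurableSpace.comap X inferInstance]) ω = H |X ω|) ∧
    (∀ᵐ ω ∂ℙ, (ℙ[fun ω' => |X ω'| | MeasurableSpace.comap L inferInstance]) ω = H (L ω)) := by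
  have hpair : Measurable (fun ω => (X ω, L ω)) := hX.prodMk hL
  have hlaw' : Measure.map (fun ω => (X ω, L ω)) ℙ
      = (volume : Measure (ℝ × ℝ)).withDensity (fun p => ((dR p).toNNReal : ℝ≥0∞)) := by
    rw [hlaw]; rfl
  have chain : ∀ F : ℝ × ℝ → ℝ, Measurable F →
      ∫ ω, F (X ω, L ω) ∂ℙ = ∫ p, dR p * F p ∂(volume : Measure (ℝ × ℝ)) := by
    intro F hF
    calc ∫ ω, F (X ω, L ω) ∂ℙ
        = ∫ p, F p ∂(Measure.map (fun ω => (X ω, L ω)) ℙ) :=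
          (integral_map hpair.aemeasurable hF.aestronglyMeasurable).symm
      _ = ∫ p, F p ∂((volume : Measure (ℝ × ℝ)).withDensity
            (fun p => ((dR p).toNNReal : ℝ≥0∞))) := by rw [hlaw']
      _ = ∫ p, (dR p).toNNReal • F p ∂(volume : Measure (ℝ × ℝ)) :=
          integral_withDensity_eq_integral_smul measurable_dR.real_toNNReal F
      _ = ∫ p, dR p * F p ∂(volume : Measure (ℝ × ℝ)) := by
          congr 1
          funext p
          rw [NNReal.smul_def, Real.coe_toNNReal _ (dR_nonneg p), smul_eq_mul]
  have hInt : ∀ F : ℝ × ℝ → ℝ, Measurable F →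
      Integrable (fun p => dR p * F p) (volume : Measure (ℝ × ℝ)) →
      Integrable (fun ω => F (X ω, L ω)) ℙ := by
    intro F hF h
    have h2 : Integrable F (Measure.map (fun ω => (X ω, L ω)) ℙ) := by
      rw [hlaw', integrable_withDensity_iff_integrable_smul measurable_dR.real_toNNReal]
      refine h.congr (Eventually.of_forall fun p => ?_)
      show dR p * F p = (dR p).toNNReal • F p
      rw [NNReal.smul_def, Real.coe_toNNReal _ (dR_nonneg p), smul_eq_mul]
    exact (integrable_map_measure hF.aestronglyMeasurable hpair.aemeasurable).mp h2
  have hDom : Integrable (fun p : ℝ × ℝ => exp (-p.1^2/4) * exp (-p.2^2/4))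
      (volume : Measure (ℝ × ℝ)) := by
    rw [Measure.volume_eq_prod]
    exact (intexp 4 (by norm_num)).mul_prod (intexp 4 (by norm_num))
  have hMono : ∀ (F : ℝ × ℝ → ℝ) (c : ℝ), AEStronglyMeasurable F (volume : Measure (ℝ × ℝ)) →
      (∀ p : ℝ × ℝ, ‖F p‖ ≤ c * (exp (-p.1^2/4) * exp (-p.2^2/4))) →
      Integrable F (volume : Measure (ℝ × ℝ)) := by
    intro F c hF hb
    exact (hDom.const_mul c).mono' hF (Eventually.of_forall hb)
  set C := ∫ x : ℝ, exp (-x^2/2) with hCdef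
  have hC0 : 0 ≤ C := integral_nonneg fun x => (exp_pos _).le
  have hHle : ∀ t : ℝ, 0 ≤ t → ‖H t‖ ≤ C := fun t ht => by
    rw [Real.norm_eq_abs, abs_of_nonneg (H_nonneg t)]; exact H_le ht
  have Ic : Integrable dR (volume : Measure (ℝ × ℝ)) :=
    hMono dR c0 measurable_dR.aestronglyMeasurable (fun p => by
      rw [Real.norm_eq_abs, abs_of_nonneg (dR_nonneg p)]; exact dR_le p)
  have Ia : Integrable (fun p : ℝ × ℝ => |p.2| * dR p) (volume : Measure (ℝ × ℝ)) :=
    hMono _ (4 * c0) (measurable_snd.abs.mul measurable_dR).aestronglyMeasurable (fun p => by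
      rw [Real.norm_eq_abs, abs_of_nonneg (mul_nonneg (abs_nonneg _) (dR_nonneg p))]
      exact snd_dR_le p)
  have Ib : Integrable (fun p : ℝ × ℝ => |p.1| * dR p) (volume : Measure (ℝ × ℝ)) :=
    hMono _ (4 * c0) (measurable_fst.abs.mul measurable_dR).aestronglyMeasurable (fun p => by
      rw [Real.norm_eq_abs, abs_of_nonneg (mul_nonneg (abs_nonneg _) (dR_nonneg p))]
      exact fst_dR_le p)
  have mHabs : Measurable (fun t : ℝ => H |t|) := measurable_H.comp measurable_abs
  have hiabs : ∀ (S : Set ℝ) (t : ℝ), |S.indicator (fun _ => (1:ℝ)) t| ≤ 1 := by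
    intro S t
    by_cases hmem : t ∈ S <;> simp [Set.indicator_apply, hmem]
  -- integrability of the four product functions
  have I1 : ∀ A : Set ℝ, MeasurableSet A →
      Integrable (fun p : ℝ × ℝ => dR p * (A.indicator (fun _ => (1:ℝ)) p.1 * p.2))
        (volume : Measure (ℝ × ℝ)) := by
    intro A hA
    refine Ia.mono' (measurable_dR.mul
      (((measurable_const.indicator hA).comp measurable_fst).mul measurable_snd)
      ).aestronglyMeasurable (Eventually.of_forall fun p => ?_)
    rw [Real.norm_eq_abs, abs_mul, abs_mul, abs_of_nonneg (dR_nonneg p)]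
    calc dR p * (|A.indicator (fun _ => (1:ℝ)) p.1| * |p.2|)
        ≤ dR p * (1 * |p.2|) := by
          refine mul_le_mul_of_nonneg_left ?_ (dR_nonneg p)
          exact mul_le_mul_of_nonneg_right (hiabs A p.1) (abs_nonneg _)
      _ = |p.2| * dR p := by ring
  have I2 : ∀ A : Set ℝ, MeasurableSet A →
      Integrable (fun p : ℝ × ℝ => dR p * (A.indicator (fun _ => (1:ℝ)) p.1 * H |p.1|))
        (volume : Measure (ℝ × ℝ)) := by
    intro A hA
    refine (Ic.const_mul C).mono' (measurable_dR.mul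
      (((measurable_const.indicator hA).comp measurable_fst).mul (mHabs.comp measurable_fst))
      ).aestronglyMeasurable (Eventually.of_forall fun p => ?_)
    rw [Real.norm_eq_abs, abs_mul, abs_mul, abs_of_nonneg (dR_nonneg p)]
    have hH : abs (H (abs p.1)) ≤ C := by
      have := hHle (abs p.1) (abs_nonneg _)
      rwa [Real.norm_eq_abs] at this
    refine le_trans (mul_le_mul_of_nonneg_left
      (mul_le_mul (hiabs A p.1) hH (abs_nonneg _) zero_le_one) (dR_nonneg p)) ?_
    exact le_of_eq (by ring)
  have I3 : ∀ B : Set ℝ, MeasurableSet B →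
      Integrable (fun p : ℝ × ℝ => dR p * (B.indicator (fun _ => (1:ℝ)) p.2 * |p.1|))
        (volume : Measure (ℝ × ℝ)) := by
    intro B hB
    refine Ib.mono' (measurable_dR.mul
      (((measurable_const.indicator hB).comp measurable_snd).mul measurable_fst.abs)
      ).aestronglyMeasurable (Eventually.of_forall fun p => ?_)
    rw [Real.norm_eq_abs, abs_mul, abs_mul, abs_of_nonneg (dR_nonneg p), abs_abs]
    calc dR p * (|B.indicator (fun _ => (1:ℝ)) p.2| * |p.1|)
        ≤ dR p * (1 * |p.1|) := by
          refine mul_le_mul_of_nonneg_left ?_ (dR_nonneg p)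
          exact mul_le_mul_of_nonneg_right (hiabs B p.2) (abs_nonneg _)
      _ = |p.1| * dR p := by ring
  have I4 : ∀ B : Set ℝ, MeasurableSet B →
      Integrable (fun p : ℝ × ℝ => dR p * (B.indicator (fun _ => (1:ℝ)) p.2 * H p.2))
        (volume : Measure (ℝ × ℝ)) := by
    intro B hB
    refine (Ic.const_mul C).mono' (measurable_dR.mul
      (((measurable_const.indicator hB).comp measurable_snd).mul (measurable_H.comp measurable_snd))
      ).aestronglyMeasurable (Eventually.of_forall fun p => ?_)
    rw [Real.norm_eq_abs, abs_mul, abs_mul, abs_of_nonneg (dR_nonneg p)]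
    by_cases h2 : 0 ≤ p.2
    · have hH : abs (H p.2) ≤ C := by
        have := hHle p.2 h2
        rwa [Real.norm_eq_abs] at this
      refine le_trans (mul_le_mul_of_nonneg_left
        (mul_le_mul (hiabs B p.2) hH (abs_nonneg _) zero_le_one) (dR_nonneg p)) ?_
      exact le_of_eq (by ring)
    · rw [dR_zero (not_le.mp h2)]
      simp
  -- integrability of L, |X|, H|X|, H∘L
  have IL : Integrable L ℙ := by
    have h := hInt (fun p => p.2) measurable_snd (by
      refine Ia.mono' (measurable_dR.mul measurable_snd).aestronglyMeasurable
        (Eventually.of_forall fun p => ?_)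
      rw [Real.norm_eq_abs, abs_mul, abs_of_nonneg (dR_nonneg p)]
      exact le_of_eq (mul_comm _ _))
    exact h
  have IabsX : Integrable (fun ω => |X ω|) ℙ := by
    have h := hInt (fun p => |p.1|) measurable_fst.abs (by
      refine Ib.mono' (measurable_dR.mul measurable_fst.abs).aestronglyMeasurable
        (Eventually.of_forall fun p => ?_)
      rw [Real.norm_eq_abs, abs_mul, abs_of_nonneg (dR_nonneg p), abs_abs]
      exact le_of_eq (mul_comm _ _))
    exact h
  have IHX : Integrable (fun ω => H |X ω|) ℙ :=
    (integrable_const C).mono' (mHabs.comp hX).aestronglyMeasurable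
      (Eventually.of_forall fun ω => hHle _ (abs_nonneg _))
  have hL0 : ∀ᵐ ω ∂ℙ, 0 ≤ L ω := by
    have hset : MeasurableSet {p : ℝ × ℝ | p.2 < 0} :=
      measurableSet_lt measurable_snd measurable_const
    have hmap : (Measure.map (fun ω => (X ω, L ω)) ℙ) {p : ℝ × ℝ | p.2 < 0} = 0 := by
      rw [hlaw, withDensity_apply _ hset]
      have hz : ∀ᵐ p ∂((volume : Measure (ℝ × ℝ)).restrict {p : ℝ × ℝ | p.2 < 0}),
          ENNReal.ofReal (if 0 ≤ p.2 then jointDensity p.1 p.2 else 0) = 0 := by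
        rw [ae_restrict_iff' hset]
        filter_upwards with p hp
        rw [if_neg (not_le.mpr hp)]
        simp
      rw [lintegral_congr_ae hz]
      simp
    have hpre : ℙ ((fun ω => (X ω, L ω)) ⁻¹' {p : ℝ × ℝ | p.2 < 0}) = 0 := by
      rw [← Measure.map_apply hpair hset, hmap]
    rw [ae_iff]
    convert hpre using 2
    ext ω
    simp [not_le]
  have IHL : Integrable (fun ω => H (L ω)) ℙ := by
    refine (integrable_const C).mono' (measurable_H.comp hL).aestronglyMeasurable ?_
    filter_upwards [hL0] with ω h using hHle _ h
  constructor
  · -- first conditional expectation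
    have hm : MeasurableSpace.comap X inferInstance ≤ (inferInstance : MeasurableSpace Ω) :=
      hX.comap_le
    haveI : SigmaFinite ((ℙ : Measure Ω).trim hm) := inferInstance
    have hsm : StronglyMeasurable[MeasurableSpace.comap X inferInstance]
        (fun ω => H |X ω|) :=
      (mHabs.comp (measurable_iff_comap_le.mpr le_rfl)).stronglyMeasurable
    have heq : ∀ s, MeasurableSet[MeasurableSpace.comap X inferInstance] s → ℙ s < ⊤ →
        ∫ ω in s, H |X ω| ∂ℙ = ∫ ω in s, L ω ∂ℙ := by
      intro s hs _
      obtain ⟨A, hA, rfl⟩ := hs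
      have e1 : ∫ ω in X ⁻¹' A, H |X ω| ∂ℙ
          = ∫ p, dR p * (A.indicator (fun _ => (1:ℝ)) p.1 * H |p.1|)
              ∂(volume : Measure (ℝ × ℝ)) := by
        have hme : Measurable (fun p : ℝ × ℝ => A.indicator (fun _ => (1:ℝ)) p.1 * H |p.1|) :=
          ((measurable_const.indicator hA).comp measurable_fst).mul (mHabs.comp measurable_fst)
        rw [← chain _ hme, ← integral_indicator (hX hA)]
        congr 1
        funext ω
        by_cases hmem : X ω ∈ A <;> simp [Set.indicator_apply, hmem]
      have e2 : ∫ ω in X ⁻¹' A, L ω ∂ℙ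
          = ∫ p, dR p * (A.indicator (fun _ => (1:ℝ)) p.1 * p.2)
              ∂(volume : Measure (ℝ × ℝ)) := by
        have hme : Measurable (fun p : ℝ × ℝ => A.indicator (fun _ => (1:ℝ)) p.1 * p.2) :=
          ((measurable_const.indicator hA).comp measurable_fst).mul measurable_snd
        rw [← chain _ hme, ← integral_indicator (hX hA)]
        congr 1
        funext ω
        by_cases hmem : X ω ∈ A <;> simp [Set.indicator_apply, hmem]
      rw [e1, e2, Measure.volume_eq_prod,
        integral_prod _ (by rw [← Measure.volume_eq_prod]; exact I2 A hA),
        integral_prod _ (by rw [← Measure.volume_eq_prod]; exact I1 A hA)]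
      congr 1
      funext x
      have r1 : ∀ l : ℝ, dR (x, l) * (A.indicator (fun _ => (1:ℝ)) x * H |x|)
          = dR (x, l) * (A.indicator (fun _ => (1:ℝ)) x * H |x|) := fun _ => rfl
      calc ∫ l, dR (x, l) * (A.indicator (fun _ => (1:ℝ)) x * H |x|)
          = (∫ l, dR (x, l)) * (A.indicator (fun _ => (1:ℝ)) x * H |x|) :=
            integral_mul_const _ _
        _ = (c0 * exp (-x^2/2)) * (A.indicator (fun _ => (1:ℝ)) x * H |x|) := by
            rw [integral_dR_snd]
        _ = (H |x| * (c0 * exp (-x^2/2))) * A.indicator (fun _ => (1:ℝ)) x := by ring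
        _ = (c0 * ∫ u in Ioi |x|, exp (-u^2/2)) * A.indicator (fun _ => (1:ℝ)) x := by
            rw [H_identity]
        _ = (∫ l, l * dR (x, l)) * A.indicator (fun _ => (1:ℝ)) x := by
            rw [integral_mul_dR_snd]
        _ = ∫ l, (l * dR (x, l)) * A.indicator (fun _ => (1:ℝ)) x :=
            (integral_mul_const _ _).symm
        _ = ∫ l, dR (x, l) * (A.indicator (fun _ => (1:ℝ)) x * l) := by
            congr 1
            funext l
            ring
    have main := ae_eq_condExp_of_forall_setIntegral_eq (μ := ℙ) hm IL
      (fun s _ _ => IHX.integrableOn) heq ⟨_, hsm, EventuallyEq.rfl⟩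
    exact main.symm
  · -- second conditional expectation
    have hm : MeasurableSpace.comap L inferInstance ≤ (inferInstance : MeasurableSpace Ω) :=
      hL.comap_le
    haveI : SigmaFinite ((ℙ : Measure Ω).trim hm) := inferInstance
    have hsm : StronglyMeasurable[MeasurableSpace.comap L inferInstance]
        (fun ω => H (L ω)) :=
      (measurable_H.comp (measurable_iff_comap_le.mpr le_rfl)).stronglyMeasurable
    have heq : ∀ s, MeasurableSet[MeasurableSpace.comap L inferInstance] s → ℙ s < ⊤ →
        ∫ ω in s, H (L ω) ∂ℙ = ∫ ω in s, |X ω| ∂ℙ := by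
      intro s hs _
      obtain ⟨B, hB, rfl⟩ := hs
      have e1 : ∫ ω in L ⁻¹' B, H (L ω) ∂ℙ
          = ∫ p, dR p * (B.indicator (fun _ => (1:ℝ)) p.2 * H p.2)
              ∂(volume : Measure (ℝ × ℝ)) := by
        have hme : Measurable (fun p : ℝ × ℝ => B.indicator (fun _ => (1:ℝ)) p.2 * H p.2) :=
          ((measurable_const.indicator hB).comp measurable_snd).mul (measurable_H.comp measurable_snd)
        rw [← chain _ hme, ← integral_indicator (hL hB)]
        congr 1
        funext ω
        by_cases hmem : L ω ∈ B <;> simp [Set.indicator_apply, hmem]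
      have e2 : ∫ ω in L ⁻¹' B, |X ω| ∂ℙ
          = ∫ p, dR p * (B.indicator (fun _ => (1:ℝ)) p.2 * |p.1|)
              ∂(volume : Measure (ℝ × ℝ)) := by
        have hme : Measurable (fun p : ℝ × ℝ => B.indicator (fun _ => (1:ℝ)) p.2 * |p.1|) :=
          ((measurable_const.indicator hB).comp measurable_snd).mul measurable_fst.abs
        rw [← chain _ hme, ← integral_indicator (hL hB)]
        congr 1
        funext ω
        by_cases hmem : L ω ∈ B <;> simp [Set.indicator_apply, hmem]
      rw [e1, e2, Measure.volume_eq_prod,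
        integral_prod_symm _ (by rw [← Measure.volume_eq_prod]; exact I4 B hB),
        integral_prod_symm _ (by rw [← Measure.volume_eq_prod]; exact I3 B hB)]
      congr 1
      funext l
      by_cases hl : 0 ≤ l
      · calc ∫ x, dR (x, l) * (B.indicator (fun _ => (1:ℝ)) l * H l)
            = (∫ x, dR (x, l)) * (B.indicator (fun _ => (1:ℝ)) l * H l) :=
              integral_mul_const _ _
          _ = (2 * (c0 * exp (-l^2/2))) * (B.indicator (fun _ => (1:ℝ)) l * H l) := by
              rw [integral_dR_fst l hl]
          _ = (H l * (2 * (c0 * exp (-l^2/2)))) * B.indicator (fun _ => (1:ℝ)) l := by ring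
          _ = (2 * (c0 * ∫ u in Ioi l, exp (-u^2/2))) * B.indicator (fun _ => (1:ℝ)) l := by
              rw [H_identity' hl]
          _ = (∫ x, |x| * dR (x, l)) * B.indicator (fun _ => (1:ℝ)) l := by
              rw [integral_mul_dR_fst l hl]
          _ = ∫ x, (|x| * dR (x, l)) * B.indicator (fun _ => (1:ℝ)) l :=
              (integral_mul_const _ _).symm
          _ = ∫ x, dR (x, l) * (B.indicator (fun _ => (1:ℝ)) l * |x|) := by
              congr 1
              funext x
              ring
      · have hz : ∀ x : ℝ, dR (x, l) = 0 := fun x => dR_zero (not_le.mp hl)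
        simp [hz]
    have main := ae_eq_condExp_of_forall_setIntegral_eq (μ := ℙ) hm IabsX
      (fun s _ _ => IHL.integrableOn) heq ⟨_, hsm, EventuallyEq.rfl⟩
    exact main.symm
end

section
/- For every l > 0, H(l) = l · E[1/(N² + l²)], where N is a standard Gaussian random variable; that is, e^{l²/2} ∫_l^∞ e^{−x²/2} dx = l · ∫_ℝ (1/(x²+l²)) · (1/√(2π)) e^{−x²/2} dx. -/
open MeasureTheory ProbabilityTheory Real Set

lemma aux_integral_exp_neg_Ioi {a : ℝ} (ha : 0 < a) :
    ∫ t in Ioi (0:ℝ), Real.exp (-(a * t)) = 1 / a := by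
  have h := integral_rpow_mul_exp_neg_mul_Ioi (a := 1) (r := a) one_pos ha
  simpa [Real.rpow_one, Real.Gamma_one] using h

lemma aux_inner (l x : ℝ) (hl : 0 < l) :
    ∫ t in Ioi (0:ℝ), Real.exp (-x ^ 2 / 2) * Real.exp (-((x ^ 2 + l ^ 2) * t))
      = Real.exp (-x ^ 2 / 2) * (1 / (x ^ 2 + l ^ 2)) := by
  rw [integral_const_mul, aux_integral_exp_neg_Ioi (by positivity)]

lemma aux_integrable (l : ℝ) (hl : 0 < l) :
    Integrable (Function.uncurry fun x t =>
      Real.exp (-x ^ 2 / 2) * Real.exp (-((x ^ 2 + l ^ 2) * t)))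
      (volume.prod (volume.restrict (Ioi 0))) := by
  have hmeas : AEStronglyMeasurable (Function.uncurry fun x t =>
      Real.exp (-x ^ 2 / 2) * Real.exp (-((x ^ 2 + l ^ 2) * t)))
      (volume.prod (volume.restrict (Ioi 0))) := by
    apply Measurable.aestronglyMeasurable
    fun_prop
  rw [MeasureTheory.integrable_prod_iff hmeas]
  constructor
  · refine ae_of_all _ fun x => ?_
    have h : IntegrableOn (fun t => Real.exp (-(x ^ 2 + l ^ 2) * t)) (Ioi 0) :=
      exp_neg_integrableOn_Ioi 0 (by positivity)
    refine (h.const_mul (Real.exp (-x ^ 2 / 2))).congr (Filter.EventuallyEq.fun_comp ?_ id)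
    refine ae_of_all _ fun t => ?_
    simp only [neg_mul]
  · have hInt : Integrable (fun x : ℝ => (1 / l ^ 2) * Real.exp (-(2⁻¹ : ℝ) * x ^ 2)) :=
      (integrable_exp_neg_mul_sq (by norm_num : (0:ℝ) < 2⁻¹)).const_mul _
    refine hInt.mono ?_ ?_
    · exact hmeas.norm.integral_prod_right'
    · refine ae_of_all _ fun x => ?_
      simp only [Function.uncurry_apply_pair]
      have h1 : ∫ t in Ioi (0:ℝ),
          ‖Real.exp (-x ^ 2 / 2) * Real.exp (-((x ^ 2 + l ^ 2) * t))‖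
          = Real.exp (-x ^ 2 / 2) * (1 / (x ^ 2 + l ^ 2)) := by
        rw [← aux_inner l x hl]
        refine setIntegral_congr_fun measurableSet_Ioi fun t _ => ?_
        rw [norm_of_nonneg (by positivity)]
      rw [Real.norm_eq_abs, h1, abs_of_nonneg (by positivity),
        norm_of_nonneg (by positivity)]
      have hle : 1 / (x ^ 2 + l ^ 2) ≤ 1 / l ^ 2 := by
        apply one_div_le_one_div_of_le (by positivity); nlinarith [sq_nonneg x]
      have : Real.exp (-(2⁻¹ : ℝ) * x ^ 2) = Real.exp (-x ^ 2 / 2) := by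
        ring_nf
      rw [this]
      calc Real.exp (-x ^ 2 / 2) * (1 / (x ^ 2 + l ^ 2))
          ≤ Real.exp (-x ^ 2 / 2) * (1 / l ^ 2) := by
            exact mul_le_mul_of_nonneg_left hle (Real.exp_nonneg _)
        _ = 1 / l ^ 2 * Real.exp (-x ^ 2 / 2) := by ring

/-- For every `l > 0`, `H(l) = l · E[1/(N² + l²)]` where `N` is standard Gaussian:
`e^{l²/2} ∫_l^∞ e^{-x²/2} dx = l ∫_ℝ 1/(x²+l²) · (1/√(2π)) e^{-x²/2} dx`. -/
theorem H_eq_mul_integral_inv_sq_add_sq (l : ℝ) (hl : 0 < l) :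
    Real.exp (l ^ 2 / 2) * ∫ x in Set.Ioi l, Real.exp (-x ^ 2 / 2)
      = l * ∫ x : ℝ, (1 / (x ^ 2 + l ^ 2)) * ((1 / Real.sqrt (2 * π)) * Real.exp (-x ^ 2 / 2)) := by
  have hI : ∫ x : ℝ, Real.exp (-x ^ 2 / 2) * (1 / (x ^ 2 + l ^ 2))
      = ∫ t in Ioi (0:ℝ), Real.exp (-(l ^ 2 * t)) * Real.sqrt (π / (t + 1 / 2)) := by
    calc ∫ x : ℝ, Real.exp (-x ^ 2 / 2) * (1 / (x ^ 2 + l ^ 2))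
        = ∫ x : ℝ, ∫ t in Ioi (0:ℝ),
            Real.exp (-x ^ 2 / 2) * Real.exp (-((x ^ 2 + l ^ 2) * t)) := by
          exact (integral_congr_ae (ae_of_all _ fun x => (aux_inner l x hl).symm))
      _ = ∫ t in Ioi (0:ℝ), ∫ x : ℝ,
            Real.exp (-x ^ 2 / 2) * Real.exp (-((x ^ 2 + l ^ 2) * t)) := by
          exact integral_integral_swap (aux_integrable l hl)
      _ = ∫ t in Ioi (0:ℝ), Real.exp (-(l ^ 2 * t)) * Real.sqrt (π / (t + 1 / 2)) := by
          refine setIntegral_congr_fun measurableSet_Ioi fun t ht => ?_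
          have hs : (0:ℝ) < t + 1 / 2 := by
            have := (mem_Ioi.mp ht); linarith
          have : ∀ x : ℝ, Real.exp (-x ^ 2 / 2) * Real.exp (-((x ^ 2 + l ^ 2) * t))
              = Real.exp (-(l ^ 2 * t)) * Real.exp (-(t + 1 / 2) * x ^ 2) := by
            intro x
            rw [← Real.exp_add, ← Real.exp_add]; ring_nf
          simp_rw [this]
          rw [integral_const_mul, integral_gaussian]
  have hsub : ∫ t in Ioi (0:ℝ), Real.exp (-(l ^ 2 * t)) * Real.sqrt (π / (t + 1 / 2))
      = Real.sqrt (2 * π) * Real.exp (l ^ 2 / 2) *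
          ∫ u in Ioi (1:ℝ), Real.exp (-(l ^ 2 / 2) * u ^ 2) := by
    have himg : (fun u : ℝ => (u ^ 2 - 1) / 2) '' Ioi 1 = Ioi 0 := by
      ext y
      simp only [mem_image, mem_Ioi]
      constructor
      · rintro ⟨u, hu, rfl⟩; nlinarith
      · intro hy
        refine ⟨Real.sqrt (2 * y + 1), ?_, ?_⟩
        · have : (1:ℝ) = Real.sqrt 1 := (Real.sqrt_one).symm
          rw [this]
          exact Real.sqrt_lt_sqrt (by norm_num) (by linarith)
        · rw [Real.sq_sqrt (by linarith)]; ring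
    have hderiv : ∀ u ∈ Ioi (1:ℝ),
        HasDerivWithinAt (fun u : ℝ => (u ^ 2 - 1) / 2) u (Ioi 1) u := by
      intro u _
      have : HasDerivAt (fun u : ℝ => (u ^ 2 - 1) / 2) (2 * u / 2) u := by
        have h1 : HasDerivAt (fun u : ℝ => u ^ 2) (2 * u) u := by
          simpa using hasDerivAt_pow 2 u
        simpa using (h1.sub_const 1).div_const 2
      simpa using this.hasDerivWithinAt
    have hinj : InjOn (fun u : ℝ => (u ^ 2 - 1) / 2) (Ioi 1) := by
      intro a ha b hb hab
      simp only [mem_Ioi] at ha hb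
      have h2 : a ^ 2 = b ^ 2 := by
        simp only at hab; linarith
      nlinarith
    rw [← himg, integral_image_eq_integral_abs_deriv_smul measurableSet_Ioi hderiv hinj]
    rw [← integral_const_mul]
    refine setIntegral_congr_fun measurableSet_Ioi fun u hu => ?_
    have hu1 : (1:ℝ) < u := mem_Ioi.mp hu
    have hu0 : (0:ℝ) < u := by linarith
    have h1 : (u ^ 2 - 1) / 2 + 1 / 2 = u ^ 2 / 2 := by ring
    have h2 : Real.sqrt (π / (u ^ 2 / 2)) = Real.sqrt (2 * π) / u := by
      rw [show π / (u ^ 2 / 2) = 2 * π / u ^ 2 by ring,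
        Real.sqrt_div (by positivity) (u ^ 2), Real.sqrt_sq hu0.le]
    have h3 : Real.exp (-(l ^ 2 * ((u ^ 2 - 1) / 2)))
        = Real.exp (l ^ 2 / 2) * Real.exp (-(l ^ 2 / 2) * u ^ 2) := by
      rw [← Real.exp_add]; ring_nf
    rw [smul_eq_mul, h1, h2, abs_of_pos hu0, h3]
    field_simp
  have hscale : ∫ u in Ioi (1:ℝ), Real.exp (-(l ^ 2 / 2) * u ^ 2)
      = l⁻¹ * ∫ v in Ioi l, Real.exp (-v ^ 2 / 2) := by
    have := integral_comp_mul_left_Ioi (fun v => Real.exp (-v ^ 2 / 2)) 1 hl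
    simp only [mul_one, smul_eq_mul] at this
    rw [← this]
    refine setIntegral_congr_fun measurableSet_Ioi fun u _ => ?_
    rw [mul_pow]; ring_nf
  have hRHS : ∫ x : ℝ, (1 / (x ^ 2 + l ^ 2)) * ((1 / Real.sqrt (2 * π)) * Real.exp (-x ^ 2 / 2))
      = (1 / Real.sqrt (2 * π)) * ∫ x : ℝ, Real.exp (-x ^ 2 / 2) * (1 / (x ^ 2 + l ^ 2)) := by
    rw [← integral_const_mul]
    congr 1; ext x; ring
  have hsqrt : Real.sqrt (2 * π) ≠ 0 := by positivity
  rw [hRHS, hI, hsub, hscale]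
  field_simp
end

section
/- For every l > 0, E[1/(N² + l²)] = ∫_0^∞ e^{−v l²/2} / (2√(1+v)) dv, where N is a standard Gaussian random variable; that is, ∫_ℝ (1/(x²+l²)) · (1/√(2π)) e^{−x²/2} dx = ∫_0^∞ e^{−v l²/2} / (2√(1+v)) dv. -/
open MeasureTheory ProbabilityTheory Real Set

lemma aux_exp_int {c : ℝ} (hc : 0 < c) :
    ∫ v in Set.Ioi (0 : ℝ), Real.exp (-(c * v)) = c⁻¹ := by
  have h := integral_comp_mul_left_Ioi (fun x => Real.exp (-x)) 0 hc
  simpa [mul_zero, integral_exp_neg_Ioi_zero, integral_exp_Iic_zero, smul_eq_mul] using h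

lemma aux_gauss (v : ℝ) (hv : 0 < v) :
    ∫ x : ℝ, Real.exp (-(v * x ^ 2 / 2)) * ((1 / Real.sqrt (2 * π)) * Real.exp (-x ^ 2 / 2))
      = 1 / Real.sqrt (1 + v) := by
  have h1v : (0:ℝ) < 1 + v := by linarith
  have h2π : (0:ℝ) < 2 * π := by positivity
  have hrw : (fun x : ℝ => Real.exp (-(v * x ^ 2 / 2)) *
      ((1 / Real.sqrt (2 * π)) * Real.exp (-x ^ 2 / 2)))
      = fun x : ℝ => (1 / Real.sqrt (2 * π)) * Real.exp (-((1 + v) / 2) * x ^ 2) := by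
    funext x
    rw [mul_comm, mul_assoc, ← Real.exp_add]
    congr 1
    ring
  rw [hrw, integral_const_mul, integral_gaussian]
  have : π / ((1 + v) / 2) = (2 * π) / (1 + v) := by
    field_simp
  have h2 : Real.sqrt (2 * π) ≠ 0 := by positivity
  have h3 : Real.sqrt (1 + v) ≠ 0 := by positivity
  rw [this, Real.sqrt_div' (2 * π) h1v.le]
  field_simp

/-- For every `l > 0`, `E[1/(N² + l²)] = ∫_0^∞ e^{-v l²/2}/(2√(1+v)) dv` where `N` is a
standard Gaussian random variable. -/
theorem integral_inv_sq_add_sq_gaussian (l : ℝ) (hl : 0 < l) :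
    ∫ x : ℝ, (1 / (x ^ 2 + l ^ 2)) * ((1 / Real.sqrt (2 * π)) * Real.exp (-x ^ 2 / 2))
      = ∫ v in Set.Ioi (0 : ℝ), Real.exp (-v * l ^ 2 / 2) / (2 * Real.sqrt (1 + v)) := by
  have h2π : (0:ℝ) < 2 * π := by positivity
  set φ : ℝ → ℝ := fun x => (1 / Real.sqrt (2 * π)) * Real.exp (-x ^ 2 / 2) with hφdef
  set f : ℝ → ℝ → ℝ := fun x v =>
    (1 / 2) * Real.exp (-((x ^ 2 + l ^ 2) / 2 * v)) * φ x with hfdef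
  have hc : ∀ x : ℝ, 0 < (x ^ 2 + l ^ 2) / 2 := fun x => by positivity
  have hφpos : ∀ x, 0 < φ x := fun x => by positivity
  -- inner integral over v
  have key1 : ∀ x : ℝ, ∫ v in Set.Ioi (0:ℝ), f x v
      = (1 / (x ^ 2 + l ^ 2)) * φ x := by
    intro x
    calc ∫ v in Set.Ioi (0:ℝ), f x v
        = (1 / 2) * (∫ v in Set.Ioi (0:ℝ),
            Real.exp (-((x ^ 2 + l ^ 2) / 2 * v))) * φ x := by
          rw [integral_mul_const, integral_const_mul]
      _ = (1 / 2) * ((x ^ 2 + l ^ 2) / 2)⁻¹ * φ x := by rw [aux_exp_int (hc x)]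
      _ = (1 / (x ^ 2 + l ^ 2)) * φ x := by
          have : x ^ 2 + l ^ 2 ≠ 0 := (by positivity : (0:ℝ) < _).ne'
          field_simp
  -- inner integral over x
  have key2 : ∀ v ∈ Set.Ioi (0:ℝ), ∫ x : ℝ, f x v
      = Real.exp (-v * l ^ 2 / 2) / (2 * Real.sqrt (1 + v)) := by
    intro v hv
    have hv' : (0:ℝ) < v := hv
    have hrw : (fun x : ℝ => f x v)
        = fun x : ℝ => ((1 / 2) * Real.exp (-(v * l ^ 2 / 2))) *
            (Real.exp (-(v * x ^ 2 / 2)) * φ x) := by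
      funext x
      simp only [hfdef, hφdef]
      rw [show -((x ^ 2 + l ^ 2) / 2 * v) = -(v * l ^ 2 / 2) + -(v * x ^ 2 / 2) by ring,
        Real.exp_add]
      ring
    rw [hrw, integral_const_mul, aux_gauss v hv',
      show -v * l ^ 2 / 2 = -(v * l ^ 2 / 2) by ring]
    have h1v : Real.sqrt (1 + v) ≠ 0 := by positivity
    field_simp
  -- integrability on the product
  have hφint : Integrable φ := by
    have := (integrable_exp_neg_mul_sq (by norm_num : (0:ℝ) < 1/2)).const_mul
      (1 / Real.sqrt (2 * π))
    refine this.congr ?_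
    filter_upwards with x
    simp only [hφdef]
    congr 1
    ring_nf
  have hbound : Integrable (fun x : ℝ => (1 / (x ^ 2 + l ^ 2)) * φ x) := by
    refine Integrable.mono' (hφint.const_mul (1 / l ^ 2)) ?_ ?_
    · refine (Continuous.mul ?_ ?_).aestronglyMeasurable
      · exact continuous_const.div (by continuity) fun x => (by positivity : (0:ℝ) < _).ne'
      · fun_prop
    · filter_upwards with x
      rw [Real.norm_eq_abs, abs_of_nonneg (by positivity)]
      have h1 : (1 : ℝ) / (x ^ 2 + l ^ 2) ≤ 1 / l ^ 2 := by
        apply one_div_le_one_div_of_le (by positivity)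
        nlinarith [sq_nonneg x]
      exact mul_le_mul_of_nonneg_right h1 (hφpos x).le
  have hint : Integrable (Function.uncurry f)
      (volume.prod (volume.restrict (Set.Ioi (0:ℝ)))) := by
    have hmeas : AEStronglyMeasurable (Function.uncurry f)
        (volume.prod (volume.restrict (Set.Ioi (0:ℝ)))) := by
      apply Continuous.aestronglyMeasurable
      simp only [hfdef, hφdef, Function.uncurry]
      fun_prop
    rw [integrable_prod_iff hmeas]
    constructor
    · filter_upwards with x
      have hbase : IntegrableOn (fun v : ℝ =>
          Real.exp (-((x ^ 2 + l ^ 2) / 2 * v))) (Set.Ioi (0:ℝ)) := by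
        simpa [neg_mul] using exp_neg_integrableOn_Ioi 0 (hc x)
      have := (hbase.const_mul (1/2)).mul_const (φ x)
      exact this.congr (by filter_upwards with v using rfl)
    · refine hbound.congr ?_
      filter_upwards with x
      rw [← key1 x]
      refine integral_congr_ae ?_
      filter_upwards with v
      have hpos : 0 ≤ f x v := by
        simp only [hfdef, hφdef]; positivity
      rw [Function.uncurry_apply_pair, Real.norm_eq_abs, abs_of_nonneg hpos]
  calc ∫ x : ℝ, (1 / (x ^ 2 + l ^ 2)) * φ x
      = ∫ x : ℝ, ∫ v in Set.Ioi (0:ℝ), f x v := by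
        refine integral_congr_ae ?_
        filter_upwards with x
        rw [key1 x]
    _ = ∫ v in Set.Ioi (0:ℝ), ∫ x : ℝ, f x v := integral_integral_swap hint
    _ = ∫ v in Set.Ioi (0 : ℝ), Real.exp (-v * l ^ 2 / 2) / (2 * Real.sqrt (1 + v)) :=
        setIntegral_congr_fun measurableSet_Ioi key2
end

section
/- Let E be an exponential random variable with rate 1 and V a random variable uniformly distributed on [−1,1], with E and V independent. Then the random variable √(2E)·(V/2) has density y ↦ ∫_{2|y|}^∞ e^{−z²/2} dz with respect to Lebesgue measure on ℝ. -/
open MeasureTheory ProbabilityTheory Real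
open scoped ENNReal

private lemma sq_half_image : (fun z : ℝ => z ^ 2 / 2) '' Set.Ioi 0 = Set.Ioi 0 := by
  ext e; simp only [Set.mem_image, Set.mem_Ioi]
  constructor
  · rintro ⟨z, hz, rfl⟩; positivity
  · intro he
    exact ⟨Real.sqrt (2 * e), Real.sqrt_pos.2 (by linarith), by
      rw [Real.sq_sqrt (by linarith)]; ring⟩

private lemma lintegral_gauss_tail (a : ℝ) :
    ∫⁻ z in Set.Ioi a, ENNReal.ofReal (rexp (-z ^ 2 / 2))
      = ENNReal.ofReal (∫ z in Set.Ioi a, rexp (-z ^ 2 / 2)) := by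
  rw [← ofReal_integral_eq_lintegral_ofReal]
  · have h1 : Integrable (fun z : ℝ => rexp (-(1 / 2) * z ^ 2)) :=
      integrable_exp_neg_mul_sq (by norm_num)
    have h2 : (fun z : ℝ => rexp (-z ^ 2 / 2)) = fun z : ℝ => rexp (-(1 / 2) * z ^ 2) := by
      funext z; ring_nf
    rw [h2]; exact h1.integrableOn
  · exact Filter.Eventually.of_forall fun z => (Real.exp_pos _).le

/-- If `E` is exponential with rate 1, `V` is uniform on `[-1,1]`, and `E, V` are independent,
then `√(2E)·(V/2)` has density `y ↦ ∫_{2|y|}^∞ e^{-z²/2} dz` w.r.t. Lebesgue measure on `ℝ`. -/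
theorem density_sqrt_two_exp_mul_half_uniform {Ω : Type*} [MeasureSpace Ω]
    [IsProbabilityMeasure (ℙ : Measure Ω)]
    (E V : Ω → ℝ) (hE : Measurable E) (hV : Measurable V)
    (hEdist : Measure.map E ℙ = expMeasure 1)
    (hVdist : Measure.map V ℙ = (2 : ℝ≥0∞)⁻¹ • volume.restrict (Set.Icc (-1 : ℝ) 1))
    (hindep : IndepFun E V ℙ) :
    Measure.map (fun ω => Real.sqrt (2 * E ω) * (V ω / 2)) ℙ
      = volume.withDensity
          (fun y => ENNReal.ofReal (∫ z in Set.Ioi (2 * |y|), Real.exp (-z ^ 2 / 2))) := by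
  classical
  have hg : Measurable fun p : ℝ × ℝ => Real.sqrt (2 * p.1) * (p.2 / 2) :=
    ((measurable_fst.const_mul 2).sqrt).mul (measurable_snd.div_const 2)
  set μV : Measure ℝ := (2 : ℝ≥0∞)⁻¹ • volume.restrict (Set.Icc (-1 : ℝ) 1) with hμV
  have hmap : Measure.map (fun ω => Real.sqrt (2 * E ω) * (V ω / 2)) ℙ
      = Measure.map (fun p : ℝ × ℝ => Real.sqrt (2 * p.1) * (p.2 / 2))
          ((expMeasure 1).prod μV) := by
    have h1 := (indepFun_iff_map_prod_eq_prod_map_map hE.aemeasurable hV.aemeasurable).mp hindep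
    rw [← hEdist, ← hVdist, ← h1, Measure.map_map hg (hE.prodMk hV)]
    rfl
  rw [hmap]
  ext s hs
  rw [withDensity_apply _ hs, Measure.map_apply hg hs, Measure.prod_apply (hg hs)]
  set m : ℝ → ℝ≥0∞ := fun e =>
    μV (Prod.mk e ⁻¹' ((fun p : ℝ × ℝ => Real.sqrt (2 * p.1) * (p.2 / 2)) ⁻¹' s)) with hm
  have hm_meas : Measurable m := measurable_measure_prodMk_left (hg hs)
  set T : Set (ℝ × ℝ) := {p : ℝ × ℝ | p.2 ∈ s ∧ |p.2| ≤ p.1 / 2} with hT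
  have hTm : MeasurableSet T :=
    (hs.preimage measurable_snd).inter
      (measurableSet_le measurable_snd.abs (measurable_fst.div_const 2))
  -- step A : write exponential measure integral as weighted Lebesgue integral
  have stepA : ∫⁻ e, m e ∂(expMeasure 1) = ∫⁻ e, exponentialPDF 1 e * m e := by
    have hpdfm : Measurable (exponentialPDF 1) :=
      (measurable_exponentialPDFReal 1).ennreal_ofReal
    have hexp : expMeasure 1 = volume.withDensity (exponentialPDF 1) := rfl
    rw [hexp, lintegral_withDensity_eq_lintegral_mul _ hpdfm hm_meas]
    rfl
  rw [stepA]
  -- step B : restrict to positive reals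
  have stepB : ∫⁻ e, exponentialPDF 1 e * m e
      = ∫⁻ e in Set.Ioi 0, exponentialPDF 1 e * m e := by
    rw [← lintegral_add_compl (fun e => exponentialPDF 1 e * m e)
      (measurableSet_Ioi (a := (0 : ℝ)))]
    have h0 : ∫⁻ e in (Set.Ioi (0 : ℝ))ᶜ, exponentialPDF 1 e * m e = 0 := by
      rw [Set.compl_Ioi, ← restrict_Iio_eq_restrict_Iic,
        setLIntegral_congr_fun measurableSet_Iio
          (fun e (he : e ∈ Set.Iio (0 : ℝ)) => by
            rw [exponentialPDF_of_neg he, zero_mul])]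
      simp
    rw [h0, add_zero]
  rw [stepB]
  -- step C : change of variables e = z^2/2
  have hderiv : ∀ x ∈ Set.Ioi (0 : ℝ), HasFDerivWithinAt (fun z : ℝ => z ^ 2 / 2)
      ((1 : ℝ →L[ℝ] ℝ).smulRight x) (Set.Ioi 0) x := by
    intro x _
    have h : HasDerivAt (fun z : ℝ => z ^ 2 / 2) x x := by
      have h := (hasDerivAt_pow 2 x).div_const 2
      exact h.congr_deriv (by simp)
    exact h.hasDerivWithinAt.hasFDerivWithinAt
  have hinj : Set.InjOn (fun z : ℝ => z ^ 2 / 2) (Set.Ioi 0) := by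
    intro a ha b hb hab
    simp only at hab
    nlinarith [Set.mem_Ioi.mp ha, Set.mem_Ioi.mp hb]
  have stepC := lintegral_image_eq_lintegral_abs_det_fderiv_mul volume measurableSet_Ioi
    hderiv hinj (fun e => exponentialPDF 1 e * m e)
  rw [sq_half_image] at stepC
  rw [stepC]
  -- step D/E : pointwise simplification for z > 0
  have stepD : ∫⁻ z in Set.Ioi 0, ENNReal.ofReal |((1 : ℝ →L[ℝ] ℝ).smulRight z).det|
        * (exponentialPDF 1 (z ^ 2 / 2) * m (z ^ 2 / 2))
      = ∫⁻ z in Set.Ioi 0, ∫⁻ y, ENNReal.ofReal (rexp (-z ^ 2 / 2)) * T.indicator 1 (z, y) := by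
    apply setLIntegral_congr_fun measurableSet_Ioi
    refine fun z hz => ?_
    have hz' : (0 : ℝ) < z := hz
    have hdet : ((1 : ℝ →L[ℝ] ℝ).smulRight z).det = z := ContinuousLinearMap.det_toSpanSingleton z
    have hpdf : exponentialPDF 1 (z ^ 2 / 2) = ENNReal.ofReal (rexp (-z ^ 2 / 2)) := by
      rw [exponentialPDF_of_nonneg (by positivity)]
      congr 1
      ring
    have hpre : Prod.mk (z ^ 2 / 2) ⁻¹'
        ((fun p : ℝ × ℝ => Real.sqrt (2 * p.1) * (p.2 / 2)) ⁻¹' s)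
        = (fun v : ℝ => z / 2 * v) ⁻¹' s := by
      have hsq : Real.sqrt (2 * (z ^ 2 / 2)) = z := by
        rw [show 2 * (z ^ 2 / 2) = z ^ 2 by ring, Real.sqrt_sq hz'.le]
      ext v
      simp only [Set.mem_preimage, hsq]
      rw [show z * (v / 2) = z / 2 * v by ring]
    have hmval : m (z ^ 2 / 2)
        = 2⁻¹ * volume ((fun v : ℝ => z / 2 * v) ⁻¹' s ∩ Set.Icc (-1 : ℝ) 1) := by
      rw [hm]
      simp only [hpre, hμV, Measure.smul_apply, smul_eq_mul,
        Measure.restrict_apply (hs.preimage (measurable_const_mul _))]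
    have hset : (fun v : ℝ => z / 2 * v) ⁻¹' s ∩ Set.Icc (-1 : ℝ) 1
        = (fun v : ℝ => z / 2 * v) ⁻¹' (s ∩ Set.Icc (-(z / 2)) (z / 2)) := by
      ext v
      simp only [Set.mem_inter_iff, Set.mem_preimage, Set.mem_Icc]
      constructor
      · rintro ⟨hv, h1, h2⟩
        refine ⟨hv, ?_, ?_⟩ <;> nlinarith
      · rintro ⟨hv, h1, h2⟩
        refine ⟨hv, ?_, ?_⟩ <;> nlinarith
    have hvol : volume ((fun v : ℝ => z / 2 * v) ⁻¹' (s ∩ Set.Icc (-(z / 2)) (z / 2)))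
        = ENNReal.ofReal (2 / z) * volume (s ∩ Set.Icc (-(z / 2)) (z / 2)) := by
      rw [Real.volume_preimage_mul_left (by positivity : z / 2 ≠ 0)]
      congr 1
      rw [abs_of_pos (by positivity)]
      rw [inv_div]
    have hA : volume (s ∩ Set.Icc (-(z / 2)) (z / 2))
        = ∫⁻ y, T.indicator 1 (z, y) := by
      rw [← lintegral_indicator_one (hs.inter measurableSet_Icc)]
      congr 1
      funext y
      rw [Set.indicator_apply, Set.indicator_apply]
      congr 1
      simp only [Set.mem_inter_iff, Set.mem_Icc, hT, Set.mem_setOf_eq, abs_le, eq_iff_iff]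
    have hB : ∫⁻ y, ENNReal.ofReal (rexp (-z ^ 2 / 2)) * T.indicator 1 (z, y)
        = ENNReal.ofReal (rexp (-z ^ 2 / 2)) * volume (s ∩ Set.Icc (-(z / 2)) (z / 2)) := by
      rw [lintegral_const_mul (ENNReal.ofReal (rexp (-z ^ 2 / 2)))
        (show Measurable fun y : ℝ => T.indicator (1 : ℝ × ℝ → ℝ≥0∞) (z, y) from
          (measurable_const.indicator hTm).comp measurable_prodMk_left), ← hA]
    beta_reduce
    rw [hdet, hpdf, hmval, hset, hvol, abs_of_pos hz', hB]
    -- now pure scalar arithmetic in ℝ≥0∞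
    have key : ENNReal.ofReal z * 2⁻¹ * ENNReal.ofReal (2 / z) = 1 := by
      rw [show (2 : ℝ) / z = 2 * (1 / z) by ring, ENNReal.ofReal_mul (by norm_num),
        ENNReal.ofReal_ofNat]
      rw [show ENNReal.ofReal z * 2⁻¹ * (2 * ENNReal.ofReal (1 / z))
          = (2⁻¹ * 2) * (ENNReal.ofReal z * ENNReal.ofReal (1 / z)) by ring]
      rw [ENNReal.inv_mul_cancel (by norm_num) (by norm_num), one_mul,
        ← ENNReal.ofReal_mul hz'.le]
      rw [show z * (1 / z) = 1 from mul_one_div_cancel hz'.ne']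
      simp
    calc ENNReal.ofReal z * (ENNReal.ofReal (rexp (-z ^ 2 / 2))
            * (2⁻¹ * (ENNReal.ofReal (2 / z) * volume (s ∩ Set.Icc (-(z / 2)) (z / 2)))))
        = (ENNReal.ofReal z * 2⁻¹ * ENNReal.ofReal (2 / z))
            * (ENNReal.ofReal (rexp (-z ^ 2 / 2))
              * volume (s ∩ Set.Icc (-(z / 2)) (z / 2))) := by ring
      _ = ENNReal.ofReal (rexp (-z ^ 2 / 2)) * volume (s ∩ Set.Icc (-(z / 2)) (z / 2)) := by
          rw [key, one_mul]
  rw [stepD]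
  -- step G : extend integral to all of ℝ
  have stepG : ∫⁻ z in Set.Ioi 0, ∫⁻ y, ENNReal.ofReal (rexp (-z ^ 2 / 2)) * T.indicator 1 (z, y)
      = ∫⁻ z, ∫⁻ y, ENNReal.ofReal (rexp (-z ^ 2 / 2)) * T.indicator 1 (z, y) := by
    conv_rhs => rw [← lintegral_add_compl
      (fun z => ∫⁻ y, ENNReal.ofReal (rexp (-z ^ 2 / 2)) * T.indicator 1 (z, y))
      (measurableSet_Ioi (a := (0 : ℝ)))]
    have h0 : ∫⁻ z in (Set.Ioi (0 : ℝ))ᶜ,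
        ∫⁻ y, ENNReal.ofReal (rexp (-z ^ 2 / 2)) * T.indicator 1 (z, y) = 0 := by
      rw [Set.compl_Ioi]
      have hz0 : ∀ z ∈ Set.Iic (0 : ℝ),
          ∫⁻ y, ENNReal.ofReal (rexp (-z ^ 2 / 2)) * T.indicator 1 (z, y) = 0 := by
        intro z hz
        refine le_antisymm ?_ zero_le
        have hle : ∀ y : ℝ, ENNReal.ofReal (rexp (-z ^ 2 / 2)) * T.indicator 1 (z, y)
            ≤ ({(0 : ℝ)} : Set ℝ).indicator (fun _ => (⊤ : ℝ≥0∞)) y := by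
          intro y
          by_cases hy : y = (0 : ℝ)
          · subst hy
            simp [Set.indicator_apply]
          · have : T.indicator (1 : ℝ × ℝ → ℝ≥0∞) (z, y) = 0 := by
              rw [Set.indicator_apply_eq_zero]
              intro hmem
              exfalso
              have h1 : |y| ≤ z / 2 := hmem.2
              have h2 : (0 : ℝ) < |y| := abs_pos.mpr hy
              have hz' : z ≤ 0 := hz
              linarith
            rw [this, mul_zero]
            exact zero_le
        calc ∫⁻ y, ENNReal.ofReal (rexp (-z ^ 2 / 2)) * T.indicator 1 (z, y)
            ≤ ∫⁻ y, ({(0 : ℝ)} : Set ℝ).indicator (fun _ => (⊤ : ℝ≥0∞)) y :=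
              lintegral_mono hle
          _ = 0 := by
              rw [lintegral_indicator (measurableSet_singleton 0), setLIntegral_const]
              simp
      rw [setLIntegral_congr_fun measurableSet_Iic
        hz0]
      simp
    rw [h0, add_zero]
  rw [stepG]
  -- step H : Tonelli swap
  have hGm : Measurable fun p : ℝ × ℝ =>
      ENNReal.ofReal (rexp (-p.1 ^ 2 / 2)) * T.indicator 1 p :=
    ((((measurable_fst.pow_const 2).neg.div_const 2).exp).ennreal_ofReal).mul
      (measurable_const.indicator hTm)
  rw [lintegral_lintegral_swap hGm.aemeasurable]
  -- step I : evaluate the inner integral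
  have stepI : ∀ y : ℝ, (∫⁻ z, ENNReal.ofReal (rexp (-z ^ 2 / 2)) * T.indicator 1 (z, y))
      = s.indicator (fun y => ENNReal.ofReal (∫ z in Set.Ioi (2 * |y|), rexp (-z ^ 2 / 2))) y := by
    intro y
    by_cases hy : y ∈ s
    · rw [Set.indicator_of_mem hy]
      have heq : (fun z : ℝ => ENNReal.ofReal (rexp (-z ^ 2 / 2)) * T.indicator 1 (z, y))
          = (Set.Ici (2 * |y|)).indicator (fun z => ENNReal.ofReal (rexp (-z ^ 2 / 2))) := by
        funext z
        have hiff : (z, y) ∈ T ↔ z ∈ Set.Ici (2 * |y|) := by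
          simp only [hT, Set.mem_setOf_eq, Set.mem_Ici, hy, true_and]
          rw [le_div_iff₀ (by norm_num : (0:ℝ) < 2)]
          constructor <;> intro h <;> linarith
        rw [Set.indicator_apply, Set.indicator_apply]
        by_cases hzy : (z, y) ∈ T
        · rw [if_pos hzy, if_pos (hiff.mp hzy), Pi.one_apply, mul_one]
        · rw [if_neg hzy, if_neg (fun h => hzy (hiff.mpr h)), mul_zero]
      rw [heq, lintegral_indicator measurableSet_Ici _,
        ← restrict_Ioi_eq_restrict_Ici, lintegral_gauss_tail]
    · rw [Set.indicator_of_notMem hy]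
      have hzero : ∀ z : ℝ, T.indicator (1 : ℝ × ℝ → ℝ≥0∞) (z, y) = 0 := fun z =>
        Set.indicator_of_notMem (fun h => hy h.1) 1
      simp [hzero]
  simp_rw [stepI]
  rw [lintegral_indicator hs]
end

section
/- For every nonnegative measurable function f : [0,∞) → [0,∞], ∫_0^∞ ∫_0^∞ ∫_0^1 f(x/2 + λl) · l·(x+l)·e^{−(x+l)²/2} dλ dx dl = ∫_0^∞ f(ν) · (2 ∫_ν^{2ν} e^{−z²/2} dz) dν. (This identity expresses that the Brownian meander sampled at an independent uniform time has density ν ↦ 2∫_ν^{2ν} e^{−z²/2} dz.) -/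
open MeasureTheory Real
open scoped ENNReal

section MeanderAux
open Set


lemma lam_step (f : ℝ → ℝ≥0∞) (hf : Measurable f) {l : ℝ} (hl : 0 < l) (x : ℝ) :
    ∫⁻ lam in Icc (0:ℝ) 1, f (x / 2 + lam * l)
      = ENNReal.ofReal l⁻¹ * ∫⁻ ν in Icc (x/2) (x/2 + l), f ν := by
  have hφ : Measurable (fun lam : ℝ => x / 2 + lam * l) := by fun_prop
  have hmap : Measure.map (fun lam : ℝ => x / 2 + lam * l) volume
      = ENNReal.ofReal |l⁻¹| • volume := by
    have h1 : (fun lam : ℝ => x / 2 + lam * l)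
        = (fun y : ℝ => x / 2 + y) ∘ (fun lam : ℝ => l * lam) := by
      ext lam; simp [mul_comm]
    rw [h1, ← Measure.map_map (by fun_prop) (by fun_prop),
      Real.map_volume_mul_left hl.ne', Measure.map_smul,
      map_add_left_eq_self]
  have hpre : (fun lam : ℝ => x / 2 + lam * l) ⁻¹' Icc (x/2) (x/2 + l) = Icc (0:ℝ) 1 := by
    ext lam
    simp only [mem_preimage, mem_Icc, le_add_iff_nonneg_right, add_le_add_iff_left]
    constructor
    · rintro ⟨h1, h2⟩
      exact ⟨nonneg_of_mul_nonneg_right (by linarith [h1] : (0:ℝ) ≤ l * lam) hl, by nlinarith⟩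
    · rintro ⟨h1, h2⟩
      exact ⟨mul_nonneg h1 hl.le, by nlinarith⟩
  calc ∫⁻ lam in Icc (0:ℝ) 1, f (x / 2 + lam * l)
      = ∫⁻ ν, f ν ∂(Measure.map (fun lam : ℝ => x / 2 + lam * l)
          (volume.restrict (Icc (0:ℝ) 1))) := (lintegral_map hf hφ).symm
    _ = ENNReal.ofReal l⁻¹ * ∫⁻ ν in Icc (x/2) (x/2 + l), f ν := by
        rw [← hpre, ← Measure.restrict_map hφ measurableSet_Icc, hmap,
          Measure.restrict_smul, lintegral_smul_measure, abs_of_nonneg (inv_nonneg.2 hl.le), smul_eq_mul]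


lemma ftc_piece (l a b : ℝ) (hab : a ≤ b) :
    ∫ x in a..b, (x + l) * Real.exp (-(x + l)^2/2)
      = Real.exp (-(a+l)^2/2) - Real.exp (-(b+l)^2/2) := by
  have hderiv : ∀ x ∈ Set.uIcc a b, HasDerivAt (fun y => -Real.exp (-(y + l)^2/2))
      ((x + l) * Real.exp (-(x + l)^2/2)) x := by
    intro x _
    have h1 : HasDerivAt (fun y : ℝ => -(y + l)^2/2) (-(x + l)) x := by
      have := (((hasDerivAt_id x).add_const l).pow 2).neg.div_const 2
      exact this.congr_deriv (by simp; ring)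
    have := (h1.exp).neg
    exact this.congr_deriv (by ring)
  rw [intervalIntegral.integral_eq_sub_of_hasDerivAt hderiv]
  · ring
  · apply Continuous.intervalIntegrable; fun_prop

lemma xstep {l ν : ℝ} (hl : 0 < l) (hν : 0 < ν) :
    ∫⁻ x in Set.Ioi (0:ℝ), (Set.Icc (2*ν - 2*l) (2*ν)).indicator
        (fun x => ENNReal.ofReal ((x + l) * Real.exp (-(x + l)^2/2))) x
      = ENNReal.ofReal (Real.exp (-(max (2*ν - l) l)^2/2) - Real.exp (-(2*ν + l)^2/2)) := by
  set m : ℝ := max (2*ν - 2*l) 0 with hm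
  have hmle : m ≤ 2*ν := max_le (by linarith) (by linarith)
  have hseteq : ((Set.Icc (2*ν - 2*l) (2*ν) ∩ Set.Ioi (0:ℝ) : Set ℝ))
      =ᵐ[volume] (Set.Ioc m (2*ν) : Set ℝ) := by
    rcases le_or_gt (2*ν - 2*l) 0 with h | h
    · have he : (Set.Icc (2*ν - 2*l) (2*ν) ∩ Set.Ioi (0:ℝ) : Set ℝ) = Set.Ioc 0 (2*ν) := by
        ext x; simp only [mem_inter_iff, mem_Ioi, mem_Icc, mem_Ioc]
        constructor
        · rintro ⟨⟨_, h3⟩, h1⟩; exact ⟨h1, h3⟩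
        · rintro ⟨h1, h2⟩; exact ⟨⟨by linarith, h2⟩, h1⟩
      rw [he, hm, max_eq_right h]
      exact Filter.EventuallyEq.rfl
    · have he : (Set.Icc (2*ν - 2*l) (2*ν) ∩ Set.Ioi (0:ℝ) : Set ℝ)
          = Set.Icc (2*ν - 2*l) (2*ν) := by
        apply inter_eq_left.2
        intro x hx; exact lt_of_lt_of_le h hx.1
      rw [he, hm, max_eq_left h.le]
      exact (Ioc_ae_eq_Icc (μ := volume)).symm
  rw [lintegral_indicator measurableSet_Icc, Measure.restrict_restrict measurableSet_Icc,
    setLIntegral_congr hseteq]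
  have hint : IntegrableOn (fun x => (x + l) * Real.exp (-(x + l)^2/2)) (Set.Ioc m (2*ν)) := by
    apply Continuous.integrableOn_Ioc; fun_prop
  rw [← ofReal_integral_eq_lintegral_ofReal hint]
  · rw [← intervalIntegral.integral_of_le hmle, ftc_piece l m (2*ν) hmle]
    congr 2
    rw [hm]; rcases le_or_gt (2*ν - 2*l) 0 with h | h
    · rw [max_eq_right h, zero_add, max_eq_right (by linarith)]
    · rw [max_eq_left h.le, max_eq_left (by linarith)]; ring
  · filter_upwards [self_mem_ae_restrict (measurableSet_Ioc : MeasurableSet (Set.Ioc m (2*ν)))] with x hx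
    have : 0 < x := lt_of_le_of_lt (le_max_right _ 0) hx.1
    positivity


lemma gauss_int : Integrable (fun z : ℝ => Real.exp (-z^2/2)) := by
  have h := integrable_exp_neg_mul_sq (by norm_num : (0:ℝ) < 1/2)
  convert h using 2 with z
  ring_nf

lemma lstep {ν : ℝ} (hν : 0 < ν) :
    ∫⁻ l in Set.Ioi (0:ℝ),
        ENNReal.ofReal (Real.exp (-(max (2*ν - l) l)^2/2) - Real.exp (-(2*ν + l)^2/2))
      = ENNReal.ofReal (2 * ∫ z in ν..(2*ν), Real.exp (-z^2/2)) := by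
  have hcontA : Continuous (fun l : ℝ => Real.exp (-(max (2*ν - l) l)^2/2)) := by
    apply Real.continuous_exp.comp
    apply Continuous.div_const
    exact ((continuous_const.sub continuous_id).max continuous_id).pow 2 |>.neg
  have hcontB : Continuous (fun l : ℝ => Real.exp (-(2*ν + l)^2/2)) := by fun_prop
  have hintA : IntegrableOn (fun l : ℝ => Real.exp (-(max (2*ν - l) l)^2/2)) (Set.Ioi 0) := by
    apply Integrable.mono gauss_int.integrableOn hcontA.aestronglyMeasurable.restrict
    filter_upwards [self_mem_ae_restrict (measurableSet_Ioi : MeasurableSet (Set.Ioi (0:ℝ)))]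
      with l hl
    rw [Real.norm_eq_abs, Real.norm_eq_abs, abs_of_pos (Real.exp_pos _),
      abs_of_pos (Real.exp_pos _)]
    apply Real.exp_le_exp.2
    have h0 : (0:ℝ) < l := hl
    nlinarith [le_max_right (2*ν - l) l]
  have hintB : IntegrableOn (fun l : ℝ => Real.exp (-(2*ν + l)^2/2)) (Set.Ioi 0) := by
    apply Integrable.mono gauss_int.integrableOn hcontB.aestronglyMeasurable.restrict
    filter_upwards [self_mem_ae_restrict (measurableSet_Ioi : MeasurableSet (Set.Ioi (0:ℝ)))]
      with l hl
    rw [Real.norm_eq_abs, Real.norm_eq_abs, abs_of_pos (Real.exp_pos _),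
      abs_of_pos (Real.exp_pos _)]
    apply Real.exp_le_exp.2
    have h0 : (0:ℝ) < l := hl
    nlinarith
  have hintG : IntegrableOn (fun l => Real.exp (-(max (2*ν - l) l)^2/2)
      - Real.exp (-(2*ν + l)^2/2)) (Set.Ioi 0) := hintA.sub hintB
  have hGnn : 0 ≤ᵐ[volume.restrict (Set.Ioi (0:ℝ))]
      (fun l => Real.exp (-(max (2*ν - l) l)^2/2) - Real.exp (-(2*ν + l)^2/2)) := by
    filter_upwards [self_mem_ae_restrict (measurableSet_Ioi : MeasurableSet (Set.Ioi (0:ℝ)))]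
      with l hl
    have h0 : (0:ℝ) < l := hl
    have h1 : (0:ℝ) ≤ max (2*ν - l) l := le_trans h0.le (le_max_right _ _)
    have h2 : max (2*ν - l) l ≤ 2*ν + l := max_le (by linarith) (by linarith)
    have : Real.exp (-(2*ν + l)^2/2) ≤ Real.exp (-(max (2*ν - l) l)^2/2) := by
      apply Real.exp_le_exp.2; nlinarith
    simp only [Pi.zero_apply]; linarith
  rw [← ofReal_integral_eq_lintegral_ofReal hintG hGnn]
  congr 1
  rw [integral_sub hintA hintB]
  have hAsplit : ∫ l in Set.Ioi (0:ℝ), Real.exp (-(max (2*ν - l) l)^2/2)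
      = (∫ l in Set.Ioc (0:ℝ) ν, Real.exp (-(2*ν - l)^2/2))
        + ∫ l in Set.Ioi ν, Real.exp (-l^2/2) := by
    rw [← Set.Ioc_union_Ioi_eq_Ioi hν.le,
      setIntegral_union (Set.Ioc_disjoint_Ioi le_rfl) measurableSet_Ioi
        (hintA.mono_set (Set.Ioc_subset_Ioi_self.trans (Set.Ioi_subset_Ioi le_rfl)))
        (hintA.mono_set (Set.Ioi_subset_Ioi hν.le))]
    congr 1
    · apply setIntegral_congr_fun measurableSet_Ioc
      intro l hl
      have : (2*ν - l) ⊔ l = 2*ν - l := max_eq_left (by linarith [hl.2])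
      simp only [this]
    · apply setIntegral_congr_fun measurableSet_Ioi
      intro l hl
      simp only [mem_Ioi] at hl
      have : (2*ν - l) ⊔ l = l := max_eq_right (by linarith)
      simp only [this]
  have hA1 : ∫ l in Set.Ioc (0:ℝ) ν, Real.exp (-(2*ν - l)^2/2)
      = ∫ z in ν..(2*ν), Real.exp (-z^2/2) := by
    rw [← intervalIntegral.integral_of_le hν.le,
      intervalIntegral.integral_comp_sub_left (fun z => Real.exp (-z^2/2)) (2*ν)]
    rw [show 2*ν - ν = ν from by ring, sub_zero]
  have hB : ∫ l in Set.Ioi (0:ℝ), Real.exp (-(2*ν + l)^2/2)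
      = ∫ z in Set.Ioi (2*ν), Real.exp (-z^2/2) := by
    have hemb : MeasurableEmbedding (fun l : ℝ => l + 2*ν) :=
      (Homeomorph.addRight (2*ν)).isClosedEmbedding.measurableEmbedding
    have hmap : Measure.map (fun l : ℝ => l + 2*ν) volume = volume :=
      map_add_right_eq_self volume (2*ν)
    have h := hemb.setIntegral_map (μ := volume) (fun z => Real.exp (-z^2/2)) (Set.Ioi (2*ν))
    rw [hmap] at h
    rw [h]
    have hpre : (fun l : ℝ => l + 2*ν) ⁻¹' Set.Ioi (2*ν) = Set.Ioi 0 := by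
      ext l; simp [lt_add_iff_pos_left]
    rw [hpre]
    apply setIntegral_congr_fun measurableSet_Ioi
    intro l _
    ring_nf
  have hC : ∫ l in Set.Ioi ν, Real.exp (-l^2/2)
      = (∫ z in ν..(2*ν), Real.exp (-z^2/2)) + ∫ z in Set.Ioi (2*ν), Real.exp (-z^2/2) := by
    rw [← Set.Ioc_union_Ioi_eq_Ioi (by linarith : ν ≤ 2*ν),
      setIntegral_union (Set.Ioc_disjoint_Ioi le_rfl) measurableSet_Ioi
        gauss_int.integrableOn gauss_int.integrableOn,
      intervalIntegral.integral_of_le (by linarith : ν ≤ 2*ν)]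
  rw [hAsplit, hA1, hB, hC]
  ring

end MeanderAux

section
open Set

/-- For every nonnegative measurable `f`,
`∫_0^∞ ∫_0^∞ ∫_0^1 f(x/2 + λl) l(x+l)e^{-(x+l)²/2} dλ dx dl
  = ∫_0^∞ f(ν) (2∫_ν^{2ν} e^{-z²/2} dz) dν`:
the Brownian meander sampled at an independent uniform time has density
`ν ↦ 2∫_ν^{2ν} e^{-z²/2} dz`. -/
theorem meander_uniform_sampling_density (f : ℝ → ℝ≥0∞) (hf : Measurable f) :
    (∫⁻ l in Set.Ioi (0 : ℝ), ∫⁻ x in Set.Ioi (0 : ℝ), ∫⁻ lam in Set.Icc (0 : ℝ) 1,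
        f (x / 2 + lam * l) * ENNReal.ofReal (l * (x + l) * Real.exp (-(x + l) ^ 2 / 2)))
      = ∫⁻ ν in Set.Ioi (0 : ℝ),
          f ν * ENNReal.ofReal (2 * ∫ z in ν..(2 * ν), Real.exp (-z ^ 2 / 2)) := by
  have hw : Measurable fun p : ℝ × ℝ => ENNReal.ofReal ((p.1 + _root_.id p.2) * Real.exp (-(p.1 + p.2)^2/2)) := by fun_prop
  -- Step 1: reduce the inner double integral for each l > 0
  have step1 : ∀ l : ℝ, l ∈ Set.Ioi (0:ℝ) →
      (∫⁻ x in Set.Ioi (0 : ℝ), ∫⁻ lam in Set.Icc (0 : ℝ) 1,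
        f (x / 2 + lam * l) * ENNReal.ofReal (l * (x + l) * Real.exp (-(x + l) ^ 2 / 2)))
      = ∫⁻ ν in Set.Ioi (0:ℝ), f ν * ENNReal.ofReal
          (Real.exp (-(max (2*ν - l) l)^2/2) - Real.exp (-(2*ν + l)^2/2)) := by
    intro l hl
    simp only [Set.mem_Ioi] at hl
    have e1 : (∫⁻ x in Set.Ioi (0 : ℝ), ∫⁻ lam in Set.Icc (0 : ℝ) 1,
        f (x / 2 + lam * l) * ENNReal.ofReal (l * (x + l) * Real.exp (-(x + l) ^ 2 / 2)))
        = ∫⁻ x in Set.Ioi (0:ℝ), ∫⁻ ν in Set.Ioi (0:ℝ),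
            (Set.Icc (x/2) (x/2 + l)).indicator f ν
              * ENNReal.ofReal ((x + l) * Real.exp (-(x + l)^2/2)) := by
      apply setLIntegral_congr_fun measurableSet_Ioi
      intro x hx
      simp only [Set.mem_Ioi] at hx
      beta_reduce
      rw [lintegral_mul_const _ (by fun_prop), lam_step f hf hl]
      have hIcc : Set.Icc (x/2) (x/2 + l) ⊆ Set.Ioi (0:ℝ) := by
        intro y hy
        have := hy.1
        simp only [Set.mem_Ioi]
        linarith
      rw [lintegral_mul_const _ (hf.indicator measurableSet_Icc),
        lintegral_indicator measurableSet_Icc,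
        Measure.restrict_restrict measurableSet_Icc,
        Set.inter_eq_left.2 hIcc]
      rw [show l * (x + l) * Real.exp (-(x + l)^2/2)
          = l * ((x + l) * Real.exp (-(x + l)^2/2)) from by ring,
        ENNReal.ofReal_mul hl.le]
      rw [mul_comm (ENNReal.ofReal l⁻¹) _, mul_assoc, ← mul_assoc (ENNReal.ofReal l⁻¹),
        ← ENNReal.ofReal_mul (by positivity), inv_mul_cancel₀ hl.ne', ENNReal.ofReal_one,
        one_mul]
    rw [e1]
    -- swap x and ν
    have hswap : (∫⁻ x in Set.Ioi (0:ℝ), ∫⁻ ν in Set.Ioi (0:ℝ),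
            (Set.Icc (x/2) (x/2 + l)).indicator f ν
              * ENNReal.ofReal ((x + l) * Real.exp (-(x + l)^2/2)))
        = ∫⁻ ν in Set.Ioi (0:ℝ), ∫⁻ x in Set.Ioi (0:ℝ),
            (Set.Icc (x/2) (x/2 + l)).indicator f ν
              * ENNReal.ofReal ((x + l) * Real.exp (-(x + l)^2/2)) := by
      apply lintegral_lintegral_swap
      have hS : MeasurableSet {p : ℝ × ℝ | p.1/2 ≤ p.2 ∧ p.2 ≤ p.1/2 + l} := by
        exact MeasurableSet.inter
          (measurableSet_le (measurable_fst.div_const 2) measurable_snd)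
          (measurableSet_le measurable_snd ((measurable_fst.div_const 2).add_const l))
      have heq : (Function.uncurry fun x ν => (Set.Icc (x/2) (x/2 + l)).indicator f ν
          * ENNReal.ofReal ((x + l) * Real.exp (-(x + l)^2/2)))
          = fun p : ℝ × ℝ => ({p : ℝ × ℝ | p.1/2 ≤ p.2 ∧ p.2 ≤ p.1/2 + l}).indicator
              (fun q => f q.2) p * ENNReal.ofReal ((p.1 + l) * Real.exp (-(p.1 + l)^2/2)) := by
        ext p
        simp only [Function.uncurry, Set.indicator_apply, Set.mem_Icc, Set.mem_setOf_eq]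
      rw [heq]
      exact ((Measurable.indicator (hf.comp measurable_snd) hS).mul (by fun_prop)).aemeasurable
    rw [hswap]
    apply setLIntegral_congr_fun measurableSet_Ioi
    intro ν hν
    simp only [Set.mem_Ioi] at hν
    have e2 : ∀ x : ℝ, (Set.Icc (x/2) (x/2 + l)).indicator f ν
        * ENNReal.ofReal ((x + l) * Real.exp (-(x + l)^2/2))
        = f ν * (Set.Icc (2*ν - 2*l) (2*ν)).indicator
            (fun x => ENNReal.ofReal ((x + l) * Real.exp (-(x + l)^2/2))) x := by
      intro x
      by_cases h : ν ∈ Set.Icc (x/2) (x/2 + l)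
      · have h' : x ∈ Set.Icc (2*ν - 2*l) (2*ν) := by
          constructor
          · linarith [h.2]
          · linarith [h.1]
        rw [Set.indicator_of_mem h, Set.indicator_of_mem h', mul_comm]
      · have h' : x ∉ Set.Icc (2*ν - 2*l) (2*ν) := by
          intro hx'
          exact h ⟨by linarith [hx'.2], by linarith [hx'.1]⟩
        rw [Set.indicator_of_notMem h, Set.indicator_of_notMem h', zero_mul, mul_zero]
    simp only [e2]
    rw [lintegral_const_mul _ (by
      exact Measurable.indicator (by fun_prop) measurableSet_Icc), xstep hl hν]
  rw [setLIntegral_congr_fun measurableSet_Ioi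
    (by intro l hl; exact step1 l hl)]
  -- swap l and ν
  have hswap2 : (∫⁻ l in Set.Ioi (0:ℝ), ∫⁻ ν in Set.Ioi (0:ℝ), f ν * ENNReal.ofReal
          (Real.exp (-(max (2*ν - l) l)^2/2) - Real.exp (-(2*ν + l)^2/2)))
      = ∫⁻ ν in Set.Ioi (0:ℝ), ∫⁻ l in Set.Ioi (0:ℝ), f ν * ENNReal.ofReal
          (Real.exp (-(max (2*ν - l) l)^2/2) - Real.exp (-(2*ν + l)^2/2)) := by
    apply lintegral_lintegral_swap
    apply Measurable.aemeasurable
    apply Measurable.mul (hf.comp measurable_snd)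
    apply ENNReal.measurable_ofReal.comp
    apply Measurable.sub
    · apply (Real.continuous_exp.comp (Continuous.div_const (Continuous.neg
        (Continuous.pow (((continuous_const.mul continuous_snd).sub continuous_fst).max
          continuous_fst) 2)) 2)).measurable
    · fun_prop
  rw [hswap2]
  apply setLIntegral_congr_fun measurableSet_Ioi
  intro ν hν
  simp only [Set.mem_Ioi] at hν
  beta_reduce
  rw [lintegral_const_mul _ (by
    apply ENNReal.measurable_ofReal.comp
    apply Measurable.sub
    · exact (Real.continuous_exp.comp (Continuous.div_const (Continuous.neg
        (Continuous.pow ((continuous_const.sub continuous_id).max continuous_id) 2)) 2)).measurable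
    · fun_prop), lstep hν]

end
end

section
/- Let E be an exponential random variable with rate 1 and W a random variable uniformly distributed on [1/2, 1], with E and W independent. Then the random variable √(2E)·W has density y ↦ 2∫_y^{2y} e^{−z²/2} dz with respect to Lebesgue measure on [0,∞). -/
open MeasureTheory ProbabilityTheory Real intervalIntegral Set
open scoped ENNReal

lemma mem_uIcc_half_one {w : ℝ} (hw : w ∈ Set.uIcc (1/2:ℝ) 1) : w ≠ 0 := by
  rw [Set.uIcc_of_le (by norm_num : (1/2:ℝ) ≤ 1)] at hw
  intro h; rw [h] at hw; norm_num at hw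

lemma subst_lemma (y : ℝ) :
    ∫ z in y..(2*y), Real.exp (-z^2/2)
      = ∫ w in (1/2:ℝ)..1, (y/w^2) * Real.exp (-((y/w)^2/2)) := by
  have h := intervalIntegral.integral_comp_smul_deriv (a := (1/2:ℝ)) (b := 1)
    (f := fun w => y / w) (f' := fun w => -(y / w^2)) (g := fun z => Real.exp (-z^2/2))
    (fun w hw => by
      simpa [div_eq_mul_inv, mul_comm, neg_div] using
        ((hasDerivAt_inv (mem_uIcc_half_one hw)).const_mul y))
    (by
      apply ContinuousOn.neg
      exact ContinuousOn.div continuousOn_const (by fun_prop)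
        (fun w hw => pow_ne_zero 2 (mem_uIcc_half_one hw)))
    (by fun_prop)
  simp only [smul_eq_mul] at h
  have h12 : y / (1/2 : ℝ) = 2 * y := by ring
  rw [h12, div_one, intervalIntegral.integral_symm y (2*y)] at h
  have h3 : (∫ w in (1/2:ℝ)..1, -((y/w^2) * Real.exp (-((y/w)^2/2))))
      = -∫ z in y..(2*y), Real.exp (-z^2/2) := by
    rw [← h]; congr 1 with w; simp only [Function.comp]; ring_nf
  rw [intervalIntegral.integral_neg] at h3
  linarith [h3]

lemma ftc_lemma (w x : ℝ) (hw : w ≠ 0) :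
    ∫ y in (0:ℝ)..x, 2 * ((y/w^2) * Real.exp (-((y/w)^2/2)))
      = 2 * (1 - Real.exp (-((x/w)^2/2))) := by
  have hd : ∀ y : ℝ, HasDerivAt (fun y => 2 * (1 - Real.exp (-((y/w)^2/2))))
      (2 * ((y/w^2) * Real.exp (-((y/w)^2/2)))) y := by
    intro y
    have h1 : HasDerivAt (fun y : ℝ => -((y/w)^2/2)) (-(y/w^2)) y := by
      have e1 : (fun y : ℝ => -((y/w)^2/2)) = fun y : ℝ => (-(1/(2*w^2))) * y^2 := by
        funext y; rw [div_pow]; ring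
      rw [e1]
      have h2 := (hasDerivAt_pow 2 y).const_mul (-(1/(2*w^2)))
      refine h2.congr_deriv ?_
      push_cast
      field_simp
    have h2 := (h1.exp).const_mul (-(2:ℝ))
    have h3 := h2.add_const 2
    refine (h3.congr_deriv ?_).congr_of_eventuallyEq (Filter.Eventually.of_forall fun y => ?_)
    · ring
    · ring
  rw [intervalIntegral.integral_eq_sub_of_hasDerivAt (fun y _ => hd y)]
  · simp only [zero_div, ne_eq, OfNat.ofNat_ne_zero, not_false_eq_true, zero_pow, neg_zero,
      zero_div, Real.exp_zero]
    ring
  · apply ContinuousOn.intervalIntegrable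
    fun_prop (disch := intro _ _ ; positivity)

lemma fubini_lemma (x : ℝ) (hx : 0 ≤ x) :
    ∫ y in (0:ℝ)..x, ∫ w in (1/2:ℝ)..1, 2 * ((y/w^2) * Real.exp (-((y/w)^2/2)))
      = ∫ w in (1/2:ℝ)..1, ∫ y in (0:ℝ)..x, 2 * ((y/w^2) * Real.exp (-((y/w)^2/2))) := by
  have h12 : (1/2:ℝ) ≤ 1 := by norm_num
  simp only [intervalIntegral.integral_of_le hx, intervalIntegral.integral_of_le h12]
  apply MeasureTheory.integral_integral_swap
  rw [Measure.prod_restrict]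
  have hcont : ContinuousOn (Function.uncurry fun y w : ℝ =>
      2 * ((y/w^2) * Real.exp (-((y/w)^2/2)))) (Set.Icc 0 x ×ˢ Set.Icc (1/2:ℝ) 1) := by
    apply ContinuousOn.mul continuousOn_const
    apply ContinuousOn.mul
    · apply ContinuousOn.div (by fun_prop) (by fun_prop)
      rintro ⟨y, w⟩ ⟨-, hw⟩
      have : (1/2:ℝ) ≤ w := hw.1
      positivity
    · apply Continuous.comp_continuousOn Real.continuous_exp
      apply ContinuousOn.neg
      apply ContinuousOn.div_const
      apply ContinuousOn.pow
      apply ContinuousOn.div (by fun_prop) (by fun_prop)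
      rintro ⟨y, w⟩ ⟨-, hw⟩
      have : (1/2:ℝ) ≤ w := hw.1
      positivity
  have hint : IntegrableOn (Function.uncurry fun y w : ℝ =>
      2 * ((y/w^2) * Real.exp (-((y/w)^2/2)))) (Set.Icc 0 x ×ˢ Set.Icc (1/2:ℝ) 1) volume :=
    hcont.integrableOn_compact ((isCompact_Icc).prod isCompact_Icc)
  exact (hint.mono_set (Set.prod_mono Set.Ioc_subset_Icc_self Set.Ioc_subset_Icc_self))

lemma key_lemma (x : ℝ) (hx : 0 ≤ x) :
    ∫ y in Set.Icc (0:ℝ) x, (2 * ∫ z in y..(2*y), Real.exp (-z^2/2))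
      = 2 * ∫ w in Set.Icc (1/2:ℝ) 1, (1 - Real.exp (-((x/w)^2/2))) := by
  rw [MeasureTheory.integral_Icc_eq_integral_Ioc, ← intervalIntegral.integral_of_le hx]
  calc ∫ y in (0:ℝ)..x, (2 * ∫ z in y..(2*y), Real.exp (-z^2/2))
      = ∫ y in (0:ℝ)..x, ∫ w in (1/2:ℝ)..1, 2 * ((y/w^2) * Real.exp (-((y/w)^2/2))) := by
        apply intervalIntegral.integral_congr
        intro y _
        show 2 * _ = _
        rw [subst_lemma y, ← intervalIntegral.integral_const_mul]
    _ = ∫ w in (1/2:ℝ)..1, ∫ y in (0:ℝ)..x, 2 * ((y/w^2) * Real.exp (-((y/w)^2/2))) :=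
        fubini_lemma x hx
    _ = ∫ w in (1/2:ℝ)..1, 2 * (1 - Real.exp (-((x/w)^2/2))) := by
        apply intervalIntegral.integral_congr
        intro w hw
        show _ = 2 * _
        rw [Set.uIcc_of_le (by norm_num : (1/2:ℝ) ≤ 1)] at hw
        exact ftc_lemma w x (by intro h; rw [h] at hw; norm_num at hw)
    _ = 2 * ∫ w in Set.Icc (1/2:ℝ) 1, (1 - Real.exp (-((x/w)^2/2))) := by
        rw [intervalIntegral.integral_const_mul, intervalIntegral.integral_of_le
          (by norm_num : (1/2:ℝ) ≤ 1), MeasureTheory.integral_Icc_eq_integral_Ioc]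

/-- If `E` is exponential with rate 1, `W` is uniform on `[1/2,1]`, and `E, W` are independent,
then `√(2E)·W` has density `y ↦ 2∫_y^{2y} e^{-z²/2} dz` w.r.t. Lebesgue measure on `[0,∞)`. -/
theorem density_sqrt_two_exp_mul_uniform {Ω : Type*} [MeasureSpace Ω]
    [IsProbabilityMeasure (ℙ : Measure Ω)]
    (E W : Ω → ℝ) (hE : Measurable E) (hW : Measurable W)
    (hEdist : Measure.map E ℙ = expMeasure 1)
    (hWdist : Measure.map W ℙ = (2 : ℝ≥0∞) • volume.restrict (Set.Icc (1 / 2 : ℝ) 1))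
    (hindep : IndepFun E W ℙ) :
    Measure.map (fun ω => Real.sqrt (2 * E ω) * W ω) ℙ
      = (volume.restrict (Set.Ici (0 : ℝ))).withDensity
          (fun y => ENNReal.ofReal (2 * ∫ z in y..(2 * y), Real.exp (-z ^ 2 / 2))) := by
  have h2exp : Continuous fun z : ℝ => Real.exp (-z^2/2) := by fun_prop
  set f : ℝ × ℝ → ℝ := fun p => Real.sqrt (2 * p.1) * p.2 with hf_def
  have hf : Measurable f := by
    apply Measurable.mul _ measurable_snd
    exact (measurable_const.mul measurable_fst).sqrt
  set νW : Measure ℝ := (2 : ℝ≥0∞) • volume.restrict (Set.Icc (1 / 2 : ℝ) 1) with hνW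
  haveI : IsProbabilityMeasure (expMeasure 1) := isProbabilityMeasure_expMeasure one_pos
  haveI : IsProbabilityMeasure νW := by
    constructor
    rw [hνW, Measure.smul_apply, Measure.restrict_apply MeasurableSet.univ, Set.univ_inter,
      Real.volume_Icc]
    norm_num
    rw [show (2:ℝ≥0∞) = ENNReal.ofReal 2 by simp, ← ENNReal.ofReal_mul (by norm_num : (0:ℝ) ≤ 2)]
    norm_num
  have hmap : Measure.map (fun ω => Real.sqrt (2 * E ω) * W ω) ℙ
      = ((expMeasure 1).prod νW).map f := by
    have hpair : (fun ω => Real.sqrt (2 * E ω) * W ω) = f ∘ (fun ω => (E ω, W ω)) := rfl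
    rw [hpair, ← Measure.map_map hf (hE.prodMk hW),
      (indepFun_iff_map_prod_eq_prod_map_map hE.aemeasurable hW.aemeasurable).mp hindep,
      hEdist, hWdist]
  rw [hmap]
  haveI : IsFiniteMeasure (((expMeasure 1).prod νW).map f) :=
    Measure.isFiniteMeasure_map _ f
  refine MeasureTheory.Measure.ext_of_Iic _ _ fun a => ?_
  rw [Measure.map_apply hf measurableSet_Iic,
    Measure.prod_apply_symm (hf measurableSet_Iic), hνW, lintegral_smul_measure,
    withDensity_apply _ measurableSet_Iic, Measure.restrict_restrict measurableSet_Iic,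
    Set.Iic_inter_Ici]
  by_cases ha : 0 ≤ a
  · -- main case
    have hIcc : ∀ w ∈ Set.Icc (1/2:ℝ) 1,
        (expMeasure 1) ((fun e => (e, w)) ⁻¹' (f ⁻¹' Set.Iic a))
          = ENNReal.ofReal (1 - Real.exp (-((a/w)^2/2))) := by
      intro w hw
      have hw0 : 0 < w := lt_of_lt_of_le (by norm_num) hw.1
      have hset : ((fun e => (e, w)) ⁻¹' (f ⁻¹' Set.Iic a)) = Set.Iic ((a/w)^2/2) := by
        ext e
        simp only [Set.mem_preimage, Set.mem_Iic, hf_def]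
        rw [← le_div_iff₀ hw0, Real.sqrt_le_iff]
        constructor
        · rintro ⟨-, h2⟩; linarith
        · intro h; exact ⟨div_nonneg ha hw0.le, by linarith⟩
      rw [hset]
      have ht : (0:ℝ) ≤ (a/w)^2/2 := by positivity
      have : expMeasure 1 (Set.Iic ((a/w)^2/2))
          = ∫⁻ y in Set.Iic ((a/w)^2/2), exponentialPDF 1 y := by
        rw [expMeasure, gammaMeasure, withDensity_apply _ measurableSet_Iic]
        rfl
      rw [this, lintegral_exponentialPDF_eq_antiDeriv one_pos, if_pos ht, one_mul]
    rw [setLIntegral_congr_fun measurableSet_Icc hIcc]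
    -- convert both sides to ofReal of real integrals
    have hWnn : ∀ᵐ w ∂(volume.restrict (Set.Icc (1/2:ℝ) 1)),
        0 ≤ 1 - Real.exp (-((a/w)^2/2)) := by
      apply Filter.Eventually.of_forall
      intro w
      have : Real.exp (-((a/w)^2/2)) ≤ 1 := Real.exp_le_one_iff.mpr (neg_nonpos.mpr (by positivity))
      linarith
    have hWint : IntegrableOn (fun w => 1 - Real.exp (-((a/w)^2/2)))
        (Set.Icc (1/2:ℝ) 1) volume := by
      apply ContinuousOn.integrableOn_compact isCompact_Icc
      apply ContinuousOn.sub continuousOn_const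
      apply Real.continuous_exp.comp_continuousOn
      apply ContinuousOn.neg
      apply ContinuousOn.div_const
      apply ContinuousOn.pow
      exact ContinuousOn.div continuousOn_const (by fun_prop)
        (fun w hw => by have := hw.1; positivity)
    rw [← ofReal_integral_eq_lintegral_ofReal hWint hWnn]
    -- RHS
    have hh : Continuous fun y : ℝ => 2 * ∫ z in y..(2*y), Real.exp (-z^2/2) := by
      have hP : Continuous fun t : ℝ => ∫ z in (0:ℝ)..t, Real.exp (-z^2/2) :=
        intervalIntegral.continuous_primitive
          (fun a b => h2exp.intervalIntegrable a b) 0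
      have heq : ∀ y : ℝ, ∫ z in y..(2*y), Real.exp (-z^2/2)
          = (∫ z in (0:ℝ)..(2*y), Real.exp (-z^2/2))
            - ∫ z in (0:ℝ)..y, Real.exp (-z^2/2) := fun y =>
        (intervalIntegral.integral_interval_sub_left
          (h2exp.intervalIntegrable 0 (2*y)) (h2exp.intervalIntegrable 0 y)).symm
      simp only [heq]
      exact continuous_const.mul ((hP.comp (continuous_const.mul continuous_id)).sub hP)
    have hhnn : ∀ᵐ y ∂(volume.restrict (Set.Icc (0:ℝ) a)),
        0 ≤ 2 * ∫ z in y..(2*y), Real.exp (-z^2/2) := by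
      rw [ae_restrict_iff' measurableSet_Icc]
      apply Filter.Eventually.of_forall
      intro y hy
      have : 0 ≤ ∫ z in y..(2*y), Real.exp (-z^2/2) :=
        intervalIntegral.integral_nonneg (by linarith [hy.1])
          (fun _ _ => (Real.exp_pos _).le)
      linarith
    have hhint : IntegrableOn (fun y => 2 * ∫ z in y..(2*y), Real.exp (-z^2/2))
        (Set.Icc (0:ℝ) a) volume :=
      hh.continuousOn.integrableOn_compact isCompact_Icc
    calc (2:ℝ≥0∞) * ENNReal.ofReal (∫ w in Set.Icc (1/2:ℝ) 1, (1 - Real.exp (-((a/w)^2/2))))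
        = ENNReal.ofReal (2 * ∫ w in Set.Icc (1/2:ℝ) 1, (1 - Real.exp (-((a/w)^2/2)))) := by
          rw [ENNReal.ofReal_mul (by norm_num : (0:ℝ) ≤ 2)]
          norm_num
      _ = ENNReal.ofReal (∫ y in Set.Icc (0:ℝ) a,
            (2 * ∫ z in y..(2*y), Real.exp (-z^2/2))) := by rw [key_lemma a ha]
      _ = ∫⁻ y in Set.Icc 0 a,
            ENNReal.ofReal (2 * ∫ z in y..(2 * y), Real.exp (-z ^ 2 / 2)) := by
          rw [ofReal_integral_eq_lintegral_ofReal hhint hhnn]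
  · -- a < 0
    push_neg at ha
    have hIcc : ∀ w ∈ Set.Icc (1/2:ℝ) 1,
        (expMeasure 1) ((fun e => (e, w)) ⁻¹' (f ⁻¹' Set.Iic a)) = 0 := by
      intro w hw
      have hw0 : 0 < w := lt_of_lt_of_le (by norm_num) hw.1
      have hset : ((fun e => (e, w)) ⁻¹' (f ⁻¹' Set.Iic a)) = ∅ := by
        ext e
        simp only [Set.mem_preimage, Set.mem_Iic, hf_def, Set.mem_empty_iff_false, iff_false,
          not_le]
        calc a < 0 := ha
          _ ≤ Real.sqrt (2 * e) * w := mul_nonneg (Real.sqrt_nonneg _) hw0.le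
      rw [hset, measure_empty]
    rw [setLIntegral_congr_fun measurableSet_Icc hIcc,
      lintegral_zero, smul_zero, Set.Icc_eq_empty (by linarith), Measure.restrict_empty,
      lintegral_zero_measure]
end
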